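/- arXiv:2206.04638 — 3 statements merged into one kernel-verified Lean document; each statement's English description precedes it below -/
import Mathlib

section
/- (Gärtner–Ellis theorem on ℝ^m) Let (μ_n) be a sequence of Borel probability measures on ℝ^m and r_n → ∞. Suppose that for every θ ∈ ℝ^m the limit p(θ) := lim_{n→∞} (1/r_n) log ∫_{ℝ^m} e^{r_n⟨θ,x⟩} dμ_n(x) exists, is finite, and the resulting function p : ℝ^m → ℝ is differentiable. Then LDP(μ_n, r_n) holds with rate function p*, where p*(x) := sup_{θ∈ℝ^m} [⟨x,θ⟩ − p(θ)] is the Legendre transform of p. -/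
open MeasureTheory Filter Topology RealInnerProductSpace
open scoped ENNReal NNReal

noncomputable section

set_option linter.unusedSectionVars false
set_option maxHeartbeats 1000000

namespace GEAux

lemma inv_mul_le_iff {r c : ℝ} (hr : 0 < r) {ξ : EReal} :
    ((r⁻¹ : ℝ) : EReal) * ξ ≤ (c : ℝ) ↔ ξ ≤ ((r * c : ℝ) : EReal) := by
  induction ξ using EReal.rec with
  | bot => simp [EReal.coe_mul_bot_of_pos (inv_pos.2 hr), ← EReal.coe_mul]
  | top =>
      rw [EReal.coe_mul_top_of_pos (inv_pos.2 hr)]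
      simp [← EReal.coe_mul]
  | coe x =>
      rw [← EReal.coe_mul, EReal.coe_le_coe_iff, EReal.coe_le_coe_iff]
      exact inv_mul_le_iff₀ hr

lemma le_inv_mul_iff {r c : ℝ} (hr : 0 < r) {ξ : EReal} :
    (c : ℝ) ≤ ((r⁻¹ : ℝ) : EReal) * ξ ↔ ((r * c : ℝ) : EReal) ≤ ξ := by
  induction ξ using EReal.rec with
  | bot => simp [EReal.coe_mul_bot_of_pos (inv_pos.2 hr), ← EReal.coe_mul]
  | top =>
      rw [EReal.coe_mul_top_of_pos (inv_pos.2 hr)]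
      simp [← EReal.coe_mul]
  | coe x =>
      rw [← EReal.coe_mul, EReal.coe_le_coe_iff, EReal.coe_le_coe_iff]
      constructor
      · intro h
        have := mul_le_mul_of_nonneg_left h hr.le
        rwa [mul_inv_cancel_left₀ hr.ne'] at this
      · intro h
        have := mul_le_mul_of_nonneg_left h (inv_pos.2 hr).le
        rwa [inv_mul_cancel_left₀ hr.ne'] at this

lemma inv_mul_lt_of_lt {r c : ℝ} (hr : 0 < r) {ξ : EReal}
    (h : ((r⁻¹ : ℝ) : EReal) * ξ < (c : ℝ)) : ξ < ((r * c : ℝ) : EReal) := by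
  by_contra hc
  push_neg at hc
  rw [← le_inv_mul_iff hr] at hc
  · exact absurd h (not_lt.2 hc)

lemma lt_of_const_lt_inv_mul {r c : ℝ} (hr : 0 < r) {ξ : EReal}
    (h : (c : ℝ) < ((r⁻¹ : ℝ) : EReal) * ξ) : ((r * c : ℝ) : EReal) < ξ := by
  by_contra hc
  push_neg at hc
  rw [← inv_mul_le_iff hr] at hc
  exact absurd h (not_lt.2 hc)

/-- From eventual bounds at every real level below `-L`'s negation, conclude `ξ ≤ -L`. -/
lemma le_neg_of_forall {ξ L : EReal}
    (H : ∀ a : ℝ, (a : EReal) < L → ξ ≤ ((-a : ℝ) : EReal)) : ξ ≤ -L := by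
  refine le_of_forall_gt_imp_ge_of_dense fun c hc => ?_
  induction c using EReal.rec with
  | bot => exact absurd hc (by simp)
  | top => exact le_top
  | coe c =>
      have : ((-c : ℝ) : EReal) < L := by
        rw [← EReal.neg_lt_comm] at hc
        simpa using hc
      simpa using H (-c) this

lemma neg_le_of_forall {ξ M : EReal}
    (H : ∀ a : ℝ, M < (a : EReal) → ((-a : ℝ) : EReal) ≤ ξ) : -M ≤ ξ := by
  refine le_of_forall_lt_imp_le_of_dense fun c hc => ?_
  induction c using EReal.rec with
  | bot => exact bot_le
  | top => exact absurd hc (by simp)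
  | coe c =>
      have : M < ((-c : ℝ) : EReal) := by
        rw [EReal.lt_neg_comm] at hc
        simpa using hc
      simpa using H (-c) this


variable {E : Type*} [NormedAddCommGroup E] [InnerProductSpace ℝ E]
  [FiniteDimensional ℝ E] [MeasurableSpace E] [BorelSpace E]

/-- normalized moment generating integral -/
def Z (κ : Measure E) (t : ℝ) (θ : E) : ℝ≥0∞ :=
  ∫⁻ z, ENNReal.ofReal (Real.exp (t * ⟪θ, z⟫)) ∂κ

def ExpUB (κ : ℕ → Measure E) (r : ℕ → ℝ) (q : E → ℝ) : Prop :=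
  ∀ θ : E, ∀ ε > (0:ℝ), ∀ᶠ n in atTop,
    Z (κ n) (r n) θ ≤ ENNReal.ofReal (Real.exp (r n * (q θ + ε)))

def ExpLB (κ : ℕ → Measure E) (r : ℕ → ℝ) (q : E → ℝ) : Prop :=
  ∀ θ : E, ∀ ε > (0:ℝ), ∀ᶠ n in atTop,
    ENNReal.ofReal (Real.exp (r n * (q θ - ε))) ≤ Z (κ n) (r n) θ

lemma expUB_of_tendsto {κ : ℕ → Measure E} {r : ℕ → ℝ} {p : E → ℝ}
    (hr : ∀ᶠ n in atTop, 1 ≤ r n)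
    (hp : ∀ θ : E, Tendsto
      (fun n => (((r n)⁻¹ : ℝ) * ENNReal.log (Z (κ n) (r n) θ) : EReal))
      atTop (𝓝 ((p θ : ℝ) : EReal))) :
    ExpUB κ r p := by
  intro θ ε hε
  have hlt : ((p θ : ℝ) : EReal) < ((p θ + ε : ℝ) : EReal) := by
    exact_mod_cast lt_add_of_pos_right _ hε
  filter_upwards [(hp θ).eventually_lt_const hlt, hr] with n hn hrn
  have h0 : (0:ℝ) < r n := lt_of_lt_of_le one_pos hrn
  have h2 : ENNReal.log (Z (κ n) (r n) θ) < ((r n * (p θ + ε) : ℝ) : EReal) :=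
    inv_mul_lt_of_lt h0 hn
  have h3 : ENNReal.log (Z (κ n) (r n) θ)
      < ENNReal.log (ENNReal.ofReal (Real.exp (r n * (p θ + ε)))) := by
    rwa [ENNReal.log_ofReal_of_pos (Real.exp_pos _), Real.log_exp]
  exact (ENNReal.log_lt_log_iff.1 h3).le

lemma expLB_of_tendsto {κ : ℕ → Measure E} {r : ℕ → ℝ} {p : E → ℝ}
    (hr : ∀ᶠ n in atTop, 1 ≤ r n)
    (hp : ∀ θ : E, Tendsto
      (fun n => (((r n)⁻¹ : ℝ) * ENNReal.log (Z (κ n) (r n) θ) : EReal))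
      atTop (𝓝 ((p θ : ℝ) : EReal))) :
    ExpLB κ r p := by
  intro θ ε hε
  have hlt : ((p θ - ε : ℝ) : EReal) < ((p θ : ℝ) : EReal) := by
    exact_mod_cast sub_lt_self _ hε
  filter_upwards [(hp θ).eventually_const_lt hlt, hr] with n hn hrn
  have h0 : (0:ℝ) < r n := lt_of_lt_of_le one_pos hrn
  have h2 : ((r n * (p θ - ε) : ℝ) : EReal) < ENNReal.log (Z (κ n) (r n) θ) :=
    lt_of_const_lt_inv_mul h0 hn
  have h3 : ENNReal.log (ENNReal.ofReal (Real.exp (r n * (p θ - ε))))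
      < ENNReal.log (Z (κ n) (r n) θ) := by
    rwa [ENNReal.log_ofReal_of_pos (Real.exp_pos _), Real.log_exp]
  exact (ENNReal.log_lt_log_iff.1 h3).le

lemma measurable_expInner (t : ℝ) (θ : E) :
    Measurable (fun z : E => ENNReal.ofReal (Real.exp (t * ⟪θ, z⟫))) :=
  (ENNReal.measurable_ofReal.comp
    ((Real.continuous_exp.comp (continuous_const.mul
      (continuous_const.inner continuous_id))).measurable))

lemma chernoff (κ : Measure E) {t : ℝ} (ht : 0 ≤ t) (c : ℝ) (θ : E) {B : Set E}
    (hB : ∀ z ∈ B, c ≤ ⟪θ, z⟫) :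
    κ B * ENNReal.ofReal (Real.exp (t * c)) ≤ Z κ t θ := by
  set U : Set E := {z : E | c ≤ ⟪θ, z⟫} with hUdef
  have hUmeas : MeasurableSet U :=
    (isClosed_le continuous_const (continuous_const.inner continuous_id)).measurableSet
  have hBU : B ⊆ U := fun z hz => hB z hz
  calc κ B * ENNReal.ofReal (Real.exp (t * c))
      ≤ κ U * ENNReal.ofReal (Real.exp (t * c)) := by
        exact mul_le_mul' (measure_mono hBU) le_rfl
    _ = ∫⁻ _ in U, ENNReal.ofReal (Real.exp (t * c)) ∂κ := by
        rw [setLIntegral_const, mul_comm]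
    _ ≤ ∫⁻ z in U, ENNReal.ofReal (Real.exp (t * ⟪θ, z⟫)) ∂κ := by
        refine setLIntegral_mono (measurable_expInner t θ) fun z hz => ?_
        exact ENNReal.ofReal_le_ofReal (Real.exp_le_exp.2 (mul_le_mul_of_nonneg_left hz ht))
    _ ≤ Z κ t θ := setLIntegral_le_lintegral _ _

lemma ev_chernoff {κ : ℕ → Measure E} {r : ℕ → ℝ} {q : E → ℝ} (hUB : ExpUB κ r q)
    (hr : ∀ᶠ n in atTop, 1 ≤ r n) (θ : E) {c a : ℝ} (ha : a < c - q θ) {B : Set E}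
    (hB : ∀ z ∈ B, c ≤ ⟪θ, z⟫) :
    ∀ᶠ n in atTop, κ n B ≤ ENNReal.ofReal (Real.exp (-(r n) * a)) := by
  set ε := (c - q θ - a)/2 with hεdef
  have hε : 0 < ε := by simp only [hεdef]; linarith
  filter_upwards [hUB θ ε hε, hr] with n hZ hrn
  have h0 : (0:ℝ) ≤ r n := le_trans zero_le_one hrn
  have h1 : κ n B * ENNReal.ofReal (Real.exp (r n * c))
      ≤ ENNReal.ofReal (Real.exp (r n * (q θ + ε))) :=
    (chernoff (κ n) h0 c θ hB).trans hZ
  have key : ENNReal.ofReal (Real.exp (r n * (q θ + ε)))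
      ≤ ENNReal.ofReal (Real.exp (-(r n) * a)) * ENNReal.ofReal (Real.exp (r n * c)) := by
    rw [← ENNReal.ofReal_mul (Real.exp_nonneg _), ← Real.exp_add]
    refine ENNReal.ofReal_le_ofReal (Real.exp_le_exp.2 ?_)
    have : q θ + ε ≤ c - a := by simp only [hεdef]; linarith
    nlinarith [mul_le_mul_of_nonneg_left this h0]
  have := h1.trans key
  exact (ENNReal.mul_le_mul_iff_left
    (ENNReal.ofReal_pos.2 (Real.exp_pos _)).ne' ENNReal.ofReal_ne_top).1 this


lemma nat_mul_exp_ev {r : ℕ → ℝ} (hrT : Tendsto r atTop atTop) (k : ℕ) {a b : ℝ} (hab : a < b) :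
    ∀ᶠ n in atTop, (k : ℝ≥0∞) * ENNReal.ofReal (Real.exp (-(r n) * b))
      ≤ ENNReal.ofReal (Real.exp (-(r n) * a)) := by
  have hba : (0:ℝ) < b - a := sub_pos.2 hab
  filter_upwards [hrT.eventually_ge_atTop ((Real.log k) / (b - a)),
    hrT.eventually_ge_atTop 0] with n h1 h2
  rw [← ENNReal.ofReal_natCast, ← ENNReal.ofReal_mul (Nat.cast_nonneg k)]
  apply ENNReal.ofReal_le_ofReal
  have hk : (k:ℝ) ≤ Real.exp ((b - a) * r n) := by
    rcases Nat.eq_zero_or_pos k with hk0 | hk0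
    · simp [hk0, (Real.exp_pos _).le]
    · have : Real.log k ≤ (b - a) * r n := by
        rw [div_le_iff₀ hba] at h1; linarith
      calc (k:ℝ) = Real.exp (Real.log k) := by
            rw [Real.exp_log (by exact_mod_cast hk0)]
        _ ≤ _ := Real.exp_le_exp.2 this
  calc (k:ℝ) * Real.exp (-(r n) * b) ≤ Real.exp ((b-a) * r n) * Real.exp (-(r n) * b) :=
        mul_le_mul_of_nonneg_right hk (Real.exp_nonneg _)
    _ = Real.exp (-(r n) * a) := by rw [← Real.exp_add]; ring_nf

lemma tight {κ : ℕ → Measure E} {r : ℕ → ℝ} {q : E → ℝ} (hUB : ExpUB κ r q)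
    (hrT : Tendsto r atTop atTop) (a : ℝ) :
    ∃ ρ : ℝ, 0 < ρ ∧ ∀ᶠ n in atTop,
      κ n {z : E | ρ < ‖z‖} ≤ ENNReal.ofReal (Real.exp (-(r n) * a)) := by
  have hr1 : ∀ᶠ n in atTop, 1 ≤ r n := hrT.eventually_ge_atTop 1
  -- cover the sphere by caps
  set S : Set E := Metric.sphere (0:E) 1 with hSdef
  have hScompact : IsCompact S := isCompact_sphere 0 1
  have hVopen : ∀ u : ↥S, IsOpen {v : E | (1:ℝ)/2 < ⟪(u:E), v⟫} := fun u =>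
    isOpen_lt continuous_const (continuous_const.inner continuous_id)
  have hScover : S ⊆ ⋃ u : ↥S, {v : E | (1:ℝ)/2 < ⟪(u:E), v⟫} := by
    intro v hv
    refine Set.mem_iUnion.2 ⟨⟨v, hv⟩, ?_⟩
    have : ⟪v, v⟫ = (1:ℝ) := by
      rw [real_inner_self_eq_norm_sq]
      simp [hSdef] at hv
      rw [hv]; norm_num
    simp only [Set.mem_setOf_eq, this]; norm_num
  obtain ⟨t, ht⟩ := hScompact.elim_finite_subcover _ hVopen hScover
  -- numerical constants
  set M : ℝ := (insert (0:ℝ) (t.image (fun u : ↥S => q (u : E)))).max'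
    (Finset.insert_nonempty _ _) with hMdef
  have hM0 : (0:ℝ) ≤ M := Finset.le_max' _ _ (Finset.mem_insert_self _ _)
  have hMq : ∀ u ∈ t, q (u:E) ≤ M := fun u hu =>
    Finset.le_max' _ _ (Finset.mem_insert_of_mem (Finset.mem_image_of_mem (fun u : ↥S => q (u : E)) hu))
  refine ⟨2 * (M + |a| + 2), by positivity, ?_⟩
  -- inclusion
  have hincl : {z : E | 2 * (M + |a| + 2) < ‖z‖}
      ⊆ ⋃ u ∈ t, {z : E | M + |a| + 2 ≤ ⟪(u:E), z⟫} := by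
    intro z hz
    have hz' : 2 * (M + |a| + 2) < ‖z‖ := hz
    have hzpos : (0:ℝ) < ‖z‖ := lt_of_le_of_lt (by positivity) hz'
    have hzne : z ≠ 0 := by simpa [norm_pos_iff] using hzpos
    set v : E := ‖z‖⁻¹ • z with hvdef
    have hvS : v ∈ S := by
      simp [hSdef, hvdef, norm_smul, abs_of_pos (inv_pos.2 hzpos),
        inv_mul_cancel₀ hzpos.ne']
    obtain ⟨u, hu, huv⟩ := by
      have := ht hvS
      simpa only [Set.mem_iUnion, exists_prop] using this
    refine Set.mem_biUnion hu ?_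
    have hzv : z = ‖z‖ • v := by
      rw [hvdef, smul_smul, mul_inv_cancel₀ hzpos.ne', one_smul]
    have : (1:ℝ)/2 < ⟪(u:E), v⟫ := huv
    have hinner : ⟪(u:E), z⟫ = ‖z‖ * ⟪(u:E), v⟫ := by
      conv_lhs => rw [hzv]
      rw [real_inner_smul_right]
    have h2 : ‖z‖ / 2 ≤ ⟪(u:E), z⟫ := by
      rw [hinner]; nlinarith
    have : M + |a| + 2 ≤ ‖z‖ / 2 := by linarith
    exact le_trans this h2
  -- chernoff on each cap
  have hev : ∀ u ∈ t, ∀ᶠ n in atTop,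
      κ n {z : E | M + |a| + 2 ≤ ⟪(u:E), z⟫} ≤ ENNReal.ofReal (Real.exp (-(r n) * (a+1))) := by
    intro u hu
    refine ev_chernoff hUB hr1 (u:E) (c := M + |a| + 2) ?_ (fun z hz => hz)
    have := hMq u hu
    have : a ≤ |a| := le_abs_self a
    nlinarith [hMq u hu, le_abs_self a]
  rw [← Filter.eventually_all_finset t] at hev
  filter_upwards [hev, nat_mul_exp_ev hrT t.card (lt_add_one a)] with n hn hcard
  calc κ n {z : E | 2 * (M + |a| + 2) < ‖z‖}
      ≤ κ n (⋃ u ∈ t, {z : E | M + |a| + 2 ≤ ⟪(u:E), z⟫}) := measure_mono hincl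
    _ ≤ ∑ u ∈ t, κ n {z : E | M + |a| + 2 ≤ ⟪(u:E), z⟫} := measure_biUnion_finset_le _ _
    _ ≤ ∑ _u ∈ t, ENNReal.ofReal (Real.exp (-(r n) * (a+1))) := Finset.sum_le_sum hn
    _ = (t.card : ℝ≥0∞) * ENNReal.ofReal (Real.exp (-(r n) * (a+1))) := by
        rw [Finset.sum_const, nsmul_eq_mul]
    _ ≤ ENNReal.ofReal (Real.exp (-(r n) * a)) := hcard


lemma ub_closed {κ : ℕ → Measure E} {r : ℕ → ℝ} {q : E → ℝ} (hUB : ExpUB κ r q)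
    (hrT : Tendsto r atTop atTop) {C : Set E} (hC : IsClosed C) {a : ℝ}
    (h : ∀ z ∈ C, ∃ θ : E, a < ⟪z, θ⟫ - q θ) :
    ∀ᶠ n in atTop, κ n C ≤ ENNReal.ofReal (Real.exp (-(r n) * a)) := by
  have hr1 : ∀ᶠ n in atTop, 1 ≤ r n := hrT.eventually_ge_atTop 1
  obtain ⟨ρ, hρpos, hρ⟩ := tight hUB hrT (a + 1)
  set K : Set E := C ∩ Metric.closedBall 0 ρ with hKdef
  have hKc : IsCompact K :=
    (isCompact_closedBall (0:E) ρ).of_isClosed_subset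
      (hC.inter Metric.isClosed_closedBall) Set.inter_subset_right
  -- choose exposing directions
  have hchoice : ∀ z : ↥K, ∃ θ : E, a < ⟪(z:E), θ⟫ - q θ := fun z => h z.1 z.2.1
  set θf : ↥K → E := fun z => Classical.choose (hchoice z) with hθfdef
  have hθf : ∀ z : ↥K, a < ⟪(z:E), θf z⟫ - q (θf z) := fun z =>
    Classical.choose_spec (hchoice z)
  set cf : ↥K → ℝ := fun z => (a + (⟪(z:E), θf z⟫ - q (θf z))) / 2 with hcfdef
  have hcfa : ∀ z : ↥K, a < cf z := fun z => by
    have := hθf z; simp only [hcfdef]; linarith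
  set U : ↥K → Set E := fun z => {w : E | cf z + q (θf z) < ⟪θf z, w⟫} with hUdef
  have hUopen : ∀ z : ↥K, IsOpen (U z) := fun z =>
    isOpen_lt continuous_const (continuous_const.inner continuous_id)
  have hKcover : K ⊆ ⋃ z : ↥K, U z := by
    intro w hw
    refine Set.mem_iUnion.2 ⟨⟨w, hw⟩, ?_⟩
    simp only [hUdef, Set.mem_setOf_eq]
    have h1 := hθf ⟨w, hw⟩
    have h2 : ⟪θf ⟨w, hw⟩, w⟫ = ⟪(w:E), θf ⟨w, hw⟩⟫ := real_inner_comm _ _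
    rw [h2]
    have := hcfa ⟨w, hw⟩
    simp only [hcfdef] at *
    linarith
  obtain ⟨t, ht⟩ := hKc.elim_finite_subcover U hUopen hKcover
  -- uniform level b with a < b, b < cf z for z ∈ t, and b ≤ a + 1
  set b : ℝ := (insert (a + 1) (t.image (fun z : ↥K => (a + cf z) / 2))).min'
    (Finset.insert_nonempty _ _) with hbdef
  have hba : a < b := by
    rw [hbdef]
    apply lt_of_lt_of_le ?_ (le_refl _)
    rcases Finset.min'_mem (insert (a + 1) (t.image (fun z : ↥K => (a + cf z) / 2)))
      (Finset.insert_nonempty _ _) with hmem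
    rw [Finset.mem_insert] at hmem
    rcases hmem with h1 | h1
    · rw [h1]; linarith
    · obtain ⟨z, _, hz⟩ := Finset.mem_image.1 h1
      rw [← hz]
      have := hcfa z; linarith
  have hb1 : b ≤ a + 1 := Finset.min'_le _ _ (Finset.mem_insert_self _ _)
  have hbcf : ∀ z ∈ t, b < cf z := by
    intro z hz
    have : b ≤ (a + cf z) / 2 :=
      Finset.min'_le _ _ (Finset.mem_insert_of_mem
        (Finset.mem_image_of_mem (fun z : ↥K => (a + cf z) / 2) hz))
    have := hcfa z
    linarith
  -- eventual bounds on each cover piece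
  have hev : ∀ z ∈ t, ∀ᶠ n in atTop,
      κ n (U z) ≤ ENNReal.ofReal (Real.exp (-(r n) * b)) := by
    intro z hz
    refine ev_chernoff hUB hr1 (θf z) (c := cf z + q (θf z)) ?_ (fun w hw => hw.le)
    have := hbcf z hz
    linarith
  rw [← Filter.eventually_all_finset t] at hev
  filter_upwards [hev, hρ, nat_mul_exp_ev hrT (t.card + 1) hba, hr1] with n hn hρn hcard hrn
  have hCincl : C ⊆ (⋃ z ∈ t, U z) ∪ {z : E | ρ < ‖z‖} := by
    intro w hw
    by_cases hwρ : ‖w‖ ≤ ρ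
    · left
      have hwK : w ∈ K := ⟨hw, by simpa [Metric.mem_closedBall, dist_eq_norm] using hwρ⟩
      have := ht hwK
      simpa only [Set.mem_iUnion, exists_prop] using this
    · right; exact lt_of_not_ge hwρ
  have hρb : ENNReal.ofReal (Real.exp (-(r n) * (a+1))) ≤ ENNReal.ofReal (Real.exp (-(r n) * b)) := by
    apply ENNReal.ofReal_le_ofReal
    apply Real.exp_le_exp.2
    have h0 : (0:ℝ) ≤ r n := le_trans zero_le_one hrn
    nlinarith
  calc κ n C ≤ κ n ((⋃ z ∈ t, U z) ∪ {z : E | ρ < ‖z‖}) := measure_mono hCincl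
    _ ≤ κ n (⋃ z ∈ t, U z) + κ n {z : E | ρ < ‖z‖} := measure_union_le _ _
    _ ≤ (∑ z ∈ t, κ n (U z)) + ENNReal.ofReal (Real.exp (-(r n) * (a+1))) :=
        add_le_add (measure_biUnion_finset_le _ _) hρn
    _ ≤ (∑ _z ∈ t, ENNReal.ofReal (Real.exp (-(r n) * b)))
        + ENNReal.ofReal (Real.exp (-(r n) * b)) :=
        add_le_add (Finset.sum_le_sum hn) hρb
    _ = ((t.card + 1 : ℕ) : ℝ≥0∞) * ENNReal.ofReal (Real.exp (-(r n) * b)) := by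
        rw [Finset.sum_const, nsmul_eq_mul]
        push_cast
        ring
    _ ≤ ENNReal.ofReal (Real.exp (-(r n) * a)) := hcard


lemma limsup_le_neg_of_ev {r : ℕ → ℝ} (hr1 : ∀ᶠ n in atTop, 1 ≤ r n) {f : ℕ → ℝ≥0∞} {a : ℝ}
    (h : ∀ᶠ n in atTop, f n ≤ ENNReal.ofReal (Real.exp (-(r n) * a))) :
    limsup (fun n => (((r n)⁻¹ : ℝ) * ENNReal.log (f n) : EReal)) atTop ≤ ((-a : ℝ) : EReal) := by
  rw [limsup_eq]
  apply sInf_le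
  filter_upwards [h, hr1] with n hn hrn
  have h0 : (0:ℝ) < r n := lt_of_lt_of_le one_pos hrn
  have hlog : ENNReal.log (f n) ≤ ((r n * (-a) : ℝ) : EReal) := by
    calc ENNReal.log (f n) ≤ ENNReal.log (ENNReal.ofReal (Real.exp (-(r n) * a))) :=
          ENNReal.log_monotone hn
      _ = ((-(r n) * a : ℝ) : EReal) := by
          rw [ENNReal.log_ofReal_of_pos (Real.exp_pos _), Real.log_exp]
      _ = ((r n * (-a) : ℝ) : EReal) := by norm_cast; ring
  exact (inv_mul_le_iff h0).2 hlog

lemma neg_le_liminf_of_ev {r : ℕ → ℝ} (hr1 : ∀ᶠ n in atTop, 1 ≤ r n) {f : ℕ → ℝ≥0∞} {a : ℝ}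
    (h : ∀ᶠ n in atTop, ENNReal.ofReal (Real.exp (-(r n) * a)) ≤ f n) :
    ((-a : ℝ) : EReal) ≤ liminf (fun n => (((r n)⁻¹ : ℝ) * ENNReal.log (f n) : EReal)) atTop := by
  rw [liminf_eq]
  apply le_sSup
  filter_upwards [h, hr1] with n hn hrn
  have h0 : (0:ℝ) < r n := lt_of_lt_of_le one_pos hrn
  have hlog : ((r n * (-a) : ℝ) : EReal) ≤ ENNReal.log (f n) := by
    calc ((r n * (-a) : ℝ) : EReal) = ((-(r n) * a : ℝ) : EReal) := by norm_cast; ring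
      _ = ENNReal.log (ENNReal.ofReal (Real.exp (-(r n) * a))) := by
          rw [ENNReal.log_ofReal_of_pos (Real.exp_pos _), Real.log_exp]
      _ ≤ ENNReal.log (f n) := ENNReal.log_monotone hn
  exact (le_inv_mul_iff h0).2 hlog

/-- translate `(a : EReal) < I z` into an exposing direction -/
lemma rate_lt_translate {p : E → ℝ} (hp0 : p 0 = 0) {z : E} {a : ℝ}
    (ha : (a : EReal) < (((⨆ θ : E, ENNReal.ofReal (⟪z, θ⟫ - p θ)) : ℝ≥0∞) : EReal)) :
    ∃ θ : E, a < ⟪z, θ⟫ - p θ := by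
  rcases lt_or_ge a 0 with h | h
  · exact ⟨0, by simpa [hp0] using h⟩
  · have hcoe : ((ENNReal.ofReal a : ℝ≥0∞) : EReal) = (a : EReal) := by
      rw [EReal.coe_ennreal_ofReal]
      exact congrArg _ (sup_eq_left.2 h)
    rw [← hcoe] at ha
    have ha' : ENNReal.ofReal a < ⨆ θ : E, ENNReal.ofReal (⟪z, θ⟫ - p θ) :=
      EReal.coe_ennreal_lt_coe_ennreal_iff.1 ha
    obtain ⟨θ, hθ⟩ := lt_iSup_iff.1 ha'
    refine ⟨θ, ?_⟩
    by_contra hc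
    push_neg at hc
    exact absurd (ENNReal.ofReal_le_ofReal hc) (not_le.2 hθ)

lemma rate_gt_translate {p : E → ℝ} {x : E} {a : ℝ}
    (ha : (((⨆ θ : E, ENNReal.ofReal (⟪x, θ⟫ - p θ)) : ℝ≥0∞) : EReal) < (a : EReal)) :
    ∃ b : ℝ, 0 ≤ b ∧ b < a ∧ ∀ θ : E, ⟪x, θ⟫ - p θ ≤ b := by
  set I : ℝ≥0∞ := ⨆ θ : E, ENNReal.ofReal (⟪x, θ⟫ - p θ) with hIdef
  have hItop : I ≠ ⊤ := by
    intro h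
    rw [h] at ha
    exact absurd ha (by simp)
  refine ⟨I.toReal, ENNReal.toReal_nonneg, ?_, ?_⟩
  · have hcoe : (I : EReal) = ((I.toReal : ℝ) : EReal) := by
      conv_lhs => rw [← ENNReal.ofReal_toReal hItop]
      rw [EReal.coe_ennreal_ofReal]
      exact congrArg _ (sup_eq_left.2 ENNReal.toReal_nonneg)
    rw [hcoe] at ha
    exact_mod_cast ha
  · intro θ
    have h1 : ENNReal.ofReal (⟪x, θ⟫ - p θ) ≤ I := le_iSup (fun θ => ENNReal.ofReal (⟪x, θ⟫ - p θ)) θ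
    rcases le_or_gt (⟪x, θ⟫ - p θ) 0 with h | h
    · exact h.trans ENNReal.toReal_nonneg
    · have h2 := ENNReal.toReal_mono hItop h1
      rwa [ENNReal.toReal_ofReal h.le] at h2

/-! ### calculus helpers -/

lemma hasDerivAt_line {p : E → ℝ} {η : E} (hp : DifferentiableAt ℝ p η) (w : E) :
    HasDerivAt (fun t : ℝ => p (η + t • w)) (fderiv ℝ p η w) 0 := by
  have h1 : HasDerivAt (fun t : ℝ => η + t • w) w 0 := by
    simpa using ((hasDerivAt_id (0:ℝ)).smul_const w).const_add η
  have h2 := hp.hasFDerivAt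
  have heq : η + (0:ℝ) • w = η := by simp
  rw [← heq] at h2
  have := h2.comp_hasDerivAt 0 h1
  simpa [Function.comp_def] using this

lemma deriv_zero_of_min {φ : ℝ → ℝ} {d : ℝ} (hd : HasDerivAt φ d 0)
    (hmin : ∀ t, φ 0 ≤ φ t) : d = 0 := by
  have h1 : IsLocalMin φ 0 := Filter.Eventually.of_forall hmin
  have h2 := h1.deriv_eq_zero
  rwa [hd.deriv] at h2

lemma deriv_zero_of_max {φ : ℝ → ℝ} {d : ℝ} (hd : HasDerivAt φ d 0)
    (hmax : ∀ t, φ t ≤ φ 0) : d = 0 := by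
  have h1 : IsLocalMax φ 0 := Filter.Eventually.of_forall hmax
  have h2 := h1.deriv_eq_zero
  rwa [hd.deriv] at h2

/-- the perturbed maximizer `η` and its properties -/
lemma exists_eta {p : E → ℝ} (hdiff : Differentiable ℝ p) (hp0 : p 0 = 0) {x : E} {b ε : ℝ}
    (hε : 0 < ε) (hb : ∀ θ : E, ⟪x, θ⟫ - p θ ≤ b) :
    ∃ η : E, ε * ‖η‖ ^ 2 ≤ 2 * b ∧
      (∀ w : E, fderiv ℝ p η w = ⟪x - ε • η, w⟫) := by
  have hb0 : 0 ≤ b := by have := hb 0; simpa [hp0] using this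
  set g : E → ℝ := fun θ => ⟪x, θ⟫ - p θ - ε / 2 * ‖θ‖ ^ 2 with hgdef
  have hg0 : g 0 = 0 := by simp [hgdef, hp0]
  set R : ℝ := Real.sqrt (2 * (b + 1) / ε) with hRdef
  have hR0 : 0 ≤ R := Real.sqrt_nonneg _
  have hfar : ∀ θ : E, R < ‖θ‖ → g θ < 0 := by
    intro θ hθ
    have hsq : R ^ 2 = 2 * (b + 1) / ε := Real.sq_sqrt (by positivity)
    have h1 : R ^ 2 < ‖θ‖ ^ 2 := by
      apply pow_lt_pow_left₀ hθ hR0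
      norm_num
    have h2 : 2 * (b + 1) / ε < ‖θ‖ ^ 2 := by rw [← hsq]; exact h1
    have h3 : b + 1 < ε / 2 * ‖θ‖ ^ 2 := by
      rw [div_lt_iff₀ hε] at h2
      linarith
    have h4 : ⟪x, θ⟫ - p θ ≤ b := hb θ
    simp only [hgdef]
    linarith
  have hgc : Continuous g := by
    apply Continuous.sub
    · exact (continuous_const.inner continuous_id).sub hdiff.continuous
    · exact continuous_const.mul (continuous_norm.pow 2)
  obtain ⟨η, hηmem, hηmax⟩ := (isCompact_closedBall (0:E) R).exists_isMaxOn
    ⟨0, by simpa [Metric.mem_closedBall] using hR0⟩ hgc.continuousOn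
  have hglobal : ∀ θ : E, g θ ≤ g η := by
    intro θ
    rcases le_or_gt ‖θ‖ R with h | h
    · exact hηmax (by simpa [Metric.mem_closedBall, dist_eq_norm] using h)
    · have h1 : g θ < 0 := hfar θ h
      have h2 : g 0 ≤ g η := hηmax (by simpa [Metric.mem_closedBall] using hR0)
      rw [hg0] at h2
      linarith
  refine ⟨η, ?_, ?_⟩
  · have h1 : 0 ≤ g η := hg0 ▸ hglobal 0
    have h2 : ⟪x, η⟫ - p η ≤ b := hb η
    simp only [hgdef] at h1
    nlinarith
  · intro w
    -- directional derivative of g at η vanishes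
    have hd1 : HasDerivAt (fun t : ℝ => ⟪x, η + t • w⟫) ⟪x, w⟫ 0 := by
      have h1 : HasDerivAt (fun t : ℝ => η + t • w) w 0 := by
        simpa using ((hasDerivAt_id (0:ℝ)).smul_const w).const_add η
      have := (hasDerivAt_const (0:ℝ) x).inner ℝ h1
      simpa using this
    have hd2 : HasDerivAt (fun t : ℝ => p (η + t • w)) (fderiv ℝ p η w) 0 :=
      hasDerivAt_line (hdiff η) w
    have hd3 : HasDerivAt (fun t : ℝ => ε / 2 * ‖η + t • w‖ ^ 2) (ε / 2 * (2 * ⟪η, w⟫)) 0 := by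
      have h1 : HasDerivAt (fun t : ℝ => η + t • w) w 0 := by
        simpa using ((hasDerivAt_id (0:ℝ)).smul_const w).const_add η
      have := h1.norm_sq.const_mul (ε / 2)
      simpa using this
    have hd : HasDerivAt (fun t : ℝ => g (η + t • w))
        (⟪x, w⟫ - fderiv ℝ p η w - ε / 2 * (2 * ⟪η, w⟫)) 0 := by
      exact (hd1.sub hd2).sub hd3
    have hzero : ⟪x, w⟫ - fderiv ℝ p η w - ε / 2 * (2 * ⟪η, w⟫) = 0 :=
      deriv_zero_of_max hd (fun t => by simpa using hglobal (η + t • w))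
    rw [inner_sub_left, real_inner_smul_left]
    linarith

/-- uniqueness: points satisfying the subgradient inequality at `η` equal the gradient -/
lemma eq_grad {p : E → ℝ} (hdiff : Differentiable ℝ p) {η z y : E}
    (hgrad : ∀ w : E, fderiv ℝ p η w = ⟪y, w⟫)
    (hsub : ∀ θ : E, ⟪z, θ⟫ ≤ p (θ + η) - p η) : z = y := by
  have key : ∀ w : E, ⟪z, w⟫ = ⟪y, w⟫ := by
    intro w
    set φ : ℝ → ℝ := fun t => p (η + t • w) - p η - t * ⟪z, w⟫ with hφdef
    have hφ0 : φ 0 = 0 := by simp [hφdef]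
    have hφmin : ∀ t, φ 0 ≤ φ t := by
      intro t
      have h1 := hsub (t • w)
      rw [real_inner_smul_right] at h1
      rw [hφ0]
      have h2 : t • w + η = η + t • w := add_comm _ _
      rw [h2] at h1
      simp only [hφdef]
      linarith
    have hd : HasDerivAt φ (fderiv ℝ p η w - ⟪z, w⟫) 0 := by
      have h2 := hasDerivAt_line (hdiff η) w
      have h3 : HasDerivAt (fun t : ℝ => t * ⟪z, w⟫) ⟪z, w⟫ 0 := by
        simpa using (hasDerivAt_id (0:ℝ)).mul_const ⟪z, w⟫
      exact (h2.sub_const (p η)).sub h3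
    have := deriv_zero_of_min hd hφmin
    have h4 := hgrad w
    linarith
  have h5 : ⟪z - y, z - y⟫ = (0:ℝ) := by
    rw [inner_sub_left, key (z - y)]
    ring
  have h6 := inner_self_eq_zero.1 h5
  rwa [sub_eq_zero] at h6


lemma exists_pos_level {q : E → ℝ} (hq : Continuous q) {y : E}
    (huniq : ∀ z : E, (∀ θ : E, ⟪z, θ⟫ - q θ ≤ 0) → z = y) {ρ : ℝ} (hρ : 0 < ρ) :
    ∃ c : ℝ, 0 < c ∧ ∀ z : E, ρ ≤ ‖z - y‖ → ∃ θ : E, c < ⟪z, θ⟫ - q θ := by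
  obtain ⟨M, hM⟩ := (isCompact_closedBall (0:E) 1).exists_bound_of_continuousOn hq.continuousOn
  set R : ℝ := M + ‖y‖ + ρ + 2 with hRdef
  have hM0 : 0 ≤ M := le_trans (abs_nonneg _) (hM 0 (by simp [Metric.mem_closedBall]))
  -- coercivity
  have hcoer : ∀ z : E, R < ‖z‖ → 1 < ⟪z, ‖z‖⁻¹ • z⟫ - q (‖z‖⁻¹ • z) := by
    intro z hz
    have hzpos : (0:ℝ) < ‖z‖ := lt_of_le_of_lt (by positivity) hz
    have h1 : ⟪z, ‖z‖⁻¹ • z⟫ = ‖z‖ := by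
      rw [real_inner_smul_right, real_inner_self_eq_norm_sq]
      field_simp
    have hunit : ‖z‖⁻¹ • z ∈ Metric.closedBall (0:E) 1 := by
      simp [Metric.mem_closedBall, norm_smul, abs_of_pos (inv_pos.2 hzpos),
        inv_mul_cancel₀ hzpos.ne']
    have h2 : q (‖z‖⁻¹ • z) ≤ M := le_trans (le_abs_self _) (hM _ hunit)
    rw [h1]
    have : M + ‖y‖ + ρ + 2 < ‖z‖ := hz
    have hy0 : (0:ℝ) ≤ ‖y‖ := norm_nonneg _
    linarith
  -- compact part
  set K : Set E := Metric.closedBall 0 R ∩ {z : E | ρ ≤ ‖z - y‖} with hKdef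
  have hKclosed : IsClosed K :=
    Metric.isClosed_closedBall.inter
      (isClosed_le continuous_const ((continuous_id.sub continuous_const).norm))
  have hKc : IsCompact K :=
    (isCompact_closedBall (0:E) R).of_isClosed_subset hKclosed Set.inter_subset_left
  have hchoice : ∀ z : ↥K, ∃ θ : E, 0 < ⟪(z:E), θ⟫ - q θ := by
    intro z
    by_contra hc
    push_neg at hc
    have := huniq z (fun θ => by linarith [hc θ])
    have h1 : ρ ≤ ‖(z:E) - y‖ := z.2.2
    rw [this] at h1
    simp at h1
    linarith
  set θf : ↥K → E := fun z => Classical.choose (hchoice z) with hθfdef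
  have hθf : ∀ z : ↥K, 0 < ⟪(z:E), θf z⟫ - q (θf z) := fun z =>
    Classical.choose_spec (hchoice z)
  set cf : ↥K → ℝ := fun z => (⟪(z:E), θf z⟫ - q (θf z)) / 2 with hcfdef
  have hcf0 : ∀ z : ↥K, 0 < cf z := fun z => by
    have := hθf z; simp only [hcfdef]; linarith
  set U : ↥K → Set E := fun z => {w : E | cf z + q (θf z) < ⟪θf z, w⟫} with hUdef
  have hUopen : ∀ z : ↥K, IsOpen (U z) := fun z =>
    isOpen_lt continuous_const (continuous_const.inner continuous_id)
  have hKcover : K ⊆ ⋃ z : ↥K, U z := by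
    intro w hw
    refine Set.mem_iUnion.2 ⟨⟨w, hw⟩, ?_⟩
    simp only [hUdef, Set.mem_setOf_eq]
    rw [real_inner_comm]
    have h1 := hθf ⟨w, hw⟩
    have h2 := hcf0 ⟨w, hw⟩
    simp only [hcfdef] at *
    linarith
  obtain ⟨t, ht⟩ := hKc.elim_finite_subcover U hUopen hKcover
  set c : ℝ := (insert (1:ℝ) (t.image cf)).min' (Finset.insert_nonempty _ _) with hcdef
  have hcpos : 0 < c := by
    rw [hcdef]
    rcases Finset.min'_mem (insert (1:ℝ) (t.image cf)) (Finset.insert_nonempty _ _) with hmem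
    rw [Finset.mem_insert] at hmem
    rcases hmem with h1 | h1
    · rw [h1]; norm_num
    · obtain ⟨z, _, hz⟩ := Finset.mem_image.1 h1
      rw [← hz]
      exact hcf0 z
  have hc1 : c ≤ 1 := Finset.min'_le _ _ (Finset.mem_insert_self _ _)
  refine ⟨c, hcpos, ?_⟩
  intro z hz
  by_cases hzR : ‖z‖ ≤ R
  · have hzK : z ∈ K := ⟨by simpa [Metric.mem_closedBall] using hzR, hz⟩
    obtain ⟨z', hz', hzU⟩ := by
      have := ht hzK
      simpa only [Set.mem_iUnion, exists_prop] using this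
    refine ⟨θf z', ?_⟩
    have h1 : cf z' + q (θf z') < ⟪θf z', z⟫ := hzU
    have h2 : c ≤ cf z' :=
      Finset.min'_le _ _ (Finset.mem_insert_of_mem (Finset.mem_image_of_mem cf hz'))
    rw [real_inner_comm] at h1
    linarith
  · refine ⟨‖z‖⁻¹ • z, ?_⟩
    have := hcoer z (lt_of_not_ge hzR)
    linarith


/-! ### tilting -/

lemma tilt_total {κ : Measure E} {t : ℝ} {η : E} (h0 : Z κ t η ≠ 0) (htop : Z κ t η ≠ ⊤) :
    (κ.withDensity (fun z => ENNReal.ofReal (Real.exp (t * ⟪η, z⟫)) * (Z κ t η)⁻¹))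
      Set.univ = 1 := by
  rw [withDensity_apply _ MeasurableSet.univ, Measure.restrict_univ,
    lintegral_mul_const _ (measurable_expInner t η)]
  exact ENNReal.mul_inv_cancel h0 htop

lemma tilt_Z {κ : Measure E} {t : ℝ} {η θ : E} :
    Z (κ.withDensity (fun z => ENNReal.ofReal (Real.exp (t * ⟪η, z⟫)) * (Z κ t η)⁻¹)) t θ
      = Z κ t (θ + η) * (Z κ t η)⁻¹ := by
  show (∫⁻ z, ENNReal.ofReal (Real.exp (t * ⟪θ, z⟫))
      ∂κ.withDensity (fun z => ENNReal.ofReal (Real.exp (t * ⟪η, z⟫)) * (Z κ t η)⁻¹)) = _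
  rw [lintegral_withDensity_eq_lintegral_mul _
    ((measurable_expInner t η).mul_const _) (measurable_expInner t θ)]
  have hcongr : ∀ z : E,
      ((fun z => ENNReal.ofReal (Real.exp (t * ⟪η, z⟫)) * (Z κ t η)⁻¹) *
        (fun z => ENNReal.ofReal (Real.exp (t * ⟪θ, z⟫)))) z
      = ENNReal.ofReal (Real.exp (t * ⟪θ + η, z⟫)) * (Z κ t η)⁻¹ := by
    intro z
    simp only [Pi.mul_apply]
    have h1 : ⟪θ + η, z⟫ = ⟪θ, z⟫ + ⟪η, z⟫ := inner_add_left _ _ _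
    rw [h1, mul_add, Real.exp_add, ENNReal.ofReal_mul (Real.exp_nonneg _)]
    ring
  rw [lintegral_congr hcongr,
    lintegral_mul_const _ (measurable_expInner t (θ + η))]
  rfl

lemma tilt_restrict {κ : Measure E} {t : ℝ} {η : E} (h0 : Z κ t η ≠ 0) (htop : Z κ t η ≠ ⊤)
    {B : Set E} (hB : MeasurableSet B) :
    ∫⁻ z in B, ENNReal.ofReal (Real.exp (t * ⟪η, z⟫)) ∂κ
      = Z κ t η *
        (κ.withDensity (fun z => ENNReal.ofReal (Real.exp (t * ⟪η, z⟫)) * (Z κ t η)⁻¹)) B := by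
  rw [withDensity_apply _ hB, lintegral_mul_const _ (measurable_expInner t η),
    mul_comm (∫⁻ z in B, ENNReal.ofReal (Real.exp (t * ⟪η, z⟫)) ∂κ) (Z κ t η)⁻¹,
    ← mul_assoc, ENNReal.mul_inv_cancel h0 htop, one_mul]

/-! ### lower bound core -/

lemma lower_core {μ : ℕ → Measure E}
    {r : ℕ → ℝ} (hrT : Tendsto r atTop atTop) {p : E → ℝ}
    (hUB : ExpUB μ r p) (hLB : ExpLB μ r p) (hp0 : p 0 = 0)
    (hdiff : Differentiable ℝ p) {O : Set E} (hO : IsOpen O) {x : E} (hx : x ∈ O)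
    {a b : ℝ} (hba : b < a) (hb : ∀ θ : E, ⟪x, θ⟫ - p θ ≤ b) :
    ∀ᶠ n in atTop, ENNReal.ofReal (Real.exp (-(r n) * a)) ≤ μ n O := by
  have hr1 : ∀ᶠ n in atTop, 1 ≤ r n := hrT.eventually_ge_atTop 1
  have hb0 : (0:ℝ) ≤ b := by have := hb 0; simpa [hp0] using this
  obtain ⟨δ, hδpos, hδO⟩ := Metric.isOpen_iff.1 hO x hx
  have hb1 : (0:ℝ) < b + 1 := by linarith
  set ε : ℝ := δ^2/(8*(b+1)) with hεdef
  have hεpos : 0 < ε := div_pos (by positivity) (by linarith)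
  obtain ⟨η, hη1, hgrad⟩ := exists_eta hdiff hp0 hεpos hb
  set y : E := x - ε • η with hydef
  have hyx : ‖y - x‖ ≤ δ/2 := by
    have h1 : y - x = -(ε • η) := by rw [hydef]; abel
    rw [h1, norm_neg, norm_smul, Real.norm_eq_abs, abs_of_pos hεpos]
    have h2 : (ε * ‖η‖)^2 ≤ (δ/2)^2 := by
      have h3 : ε * (2*(b+1)) = δ^2/4 := by rw [hεdef]; field_simp; ring
      have h4 : ε * (ε * ‖η‖^2) ≤ ε * (2*b) := mul_le_mul_of_nonneg_left hη1 hεpos.le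
      have h5 : ε * (2*b) ≤ ε * (2*(b+1)) := by nlinarith
      nlinarith [sq_nonneg (δ/2)]
    have h6 : 0 ≤ ε * ‖η‖ := by positivity
    have h7 : 0 ≤ δ/2 := by linarith
    exact (pow_le_pow_iff_left₀ h6 h7 two_ne_zero).1 h2
  set ρ : ℝ := min (δ/4) ((a-b)/(4*(‖η‖+1))) with hρdef
  have hρpos : 0 < ρ := lt_min (by positivity) (div_pos (by linarith) (by positivity))
  have hballO : Metric.ball y ρ ⊆ O := by
    intro z hz
    apply hδO
    rw [Metric.mem_ball] at hz ⊢
    have h1 : dist z x ≤ dist z y + dist y x := dist_triangle _ _ _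
    have h2 : dist y x = ‖y - x‖ := by rw [dist_eq_norm]
    have h3 : ρ ≤ δ/4 := min_le_left _ _
    linarith
  set q : E → ℝ := fun θ => p (θ + η) - p η with hqdef
  have hqcont : Continuous q :=
    (hdiff.continuous.comp (continuous_id.add continuous_const)).sub continuous_const
  have huniq : ∀ z : E, (∀ θ : E, ⟪z, θ⟫ - q θ ≤ 0) → z = y := by
    intro z hz
    refine eq_grad hdiff hgrad (fun θ => ?_)
    have := hz θ
    simp only [hqdef] at this
    linarith
  obtain ⟨c, hcpos, hclevel⟩ := exists_pos_level hqcont huniq hρpos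
  -- tilted measures
  set ν : ℕ → Measure E := fun n =>
    if h : Z (μ n) (r n) η ≠ 0 ∧ Z (μ n) (r n) η ≠ ⊤ then
      (μ n).withDensity
        (fun z => ENNReal.ofReal (Real.exp (r n * ⟪η, z⟫)) * (Z (μ n) (r n) η)⁻¹)
    else μ n with hνdef
  have hgood : ∀ᶠ n in atTop, Z (μ n) (r n) η ≠ 0 ∧ Z (μ n) (r n) η ≠ ⊤ := by
    filter_upwards [hUB η 1 one_pos, hLB η 1 one_pos] with n h1 h2
    constructor
    · intro h
      rw [h, le_zero_iff] at h2
      exact (ENNReal.ofReal_pos.2 (Real.exp_pos _)).ne' h2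
    · intro h
      rw [h] at h1
      exact absurd h1 (by simp)
  have hν_eq : ∀ n, (Z (μ n) (r n) η ≠ 0 ∧ Z (μ n) (r n) η ≠ ⊤) →
      ν n = (μ n).withDensity
        (fun z => ENNReal.ofReal (Real.exp (r n * ⟪η, z⟫)) * (Z (μ n) (r n) η)⁻¹) := by
    intro n h; rw [hνdef]; simp only; rw [dif_pos h]
  have hνUB : ExpUB ν r q := by
    intro θ ε' hε'
    filter_upwards [hgood, hUB (θ+η) (ε'/2) (by linarith), hLB η (ε'/2) (by linarith)]
      with n hg hu hl
    rw [hν_eq n hg, tilt_Z]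
    calc Z (μ n) (r n) (θ+η) * (Z (μ n) (r n) η)⁻¹
        ≤ ENNReal.ofReal (Real.exp (r n * (p (θ+η) + ε'/2)))
          * (ENNReal.ofReal (Real.exp (r n * (p η - ε'/2))))⁻¹ :=
          mul_le_mul' hu (ENNReal.inv_le_inv.2 hl)
      _ = ENNReal.ofReal (Real.exp (r n * (q θ + ε'))) := by
          have h1 : (Real.exp (r n * (p η - ε'/2)))⁻¹
              = Real.exp (-(r n * (p η - ε'/2))) := (Real.exp_neg _).symm
          rw [← ENNReal.ofReal_inv_of_pos (Real.exp_pos _), h1,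
            ← ENNReal.ofReal_mul (Real.exp_nonneg _), ← Real.exp_add]
          congr 1
          simp only [hqdef]
          ring
  set C : Set E := {z : E | ρ ≤ ‖z - y‖} with hCdef
  have hCclosed : IsClosed C :=
    isClosed_le continuous_const ((continuous_id.sub continuous_const).norm)
  have hνC := ub_closed hνUB hrT hCclosed (a := c) (fun z hz => hclevel z hz)
  have hhalf_ev : ∀ᶠ n in atTop,
      ENNReal.ofReal (Real.exp (-(r n) * c)) ≤ ENNReal.ofReal (1/2) := by
    filter_upwards [hrT.eventually_ge_atTop (Real.log 2 / c)] with n hn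
    apply ENNReal.ofReal_le_ofReal
    rw [div_le_iff₀ hcpos] at hn
    calc Real.exp (-(r n) * c) ≤ Real.exp (-(Real.log 2)) := by
          apply Real.exp_le_exp.2; linarith
      _ = 1/2 := by rw [Real.exp_neg, Real.exp_log two_pos]; norm_num
  have hball_ev : ∀ᶠ n in atTop, ENNReal.ofReal (1/2) ≤ ν n (Metric.ball y ρ) := by
    filter_upwards [hgood, hνC, hhalf_ev] with n hg hC2 hhalf
    have htot : ν n Set.univ = 1 := by rw [hν_eq n hg]; exact tilt_total hg.1 hg.2
    have hcover : (Set.univ : Set E) ⊆ Metric.ball y ρ ∪ C := by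
      intro z _
      rcases lt_or_ge ‖z - y‖ ρ with h | h
      · left; rw [Metric.mem_ball, dist_eq_norm]; exact h
      · right; exact h
    have h1 : (1:ℝ≥0∞) ≤ ν n (Metric.ball y ρ) + ν n C := by
      rw [← htot]
      exact (measure_mono hcover).trans (measure_union_le _ _)
    by_contra hcon
    push_neg at hcon
    have h2 : ν n (Metric.ball y ρ) + ν n C
        < ENNReal.ofReal (1/2) + ENNReal.ofReal (1/2) := by
      calc ν n (Metric.ball y ρ) + ν n C
          ≤ ν n (Metric.ball y ρ) + ENNReal.ofReal (1/2) :=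
            add_le_add le_rfl (hC2.trans hhalf)
        _ < ENNReal.ofReal (1/2) + ENNReal.ofReal (1/2) :=
            ENNReal.add_lt_add_right ENNReal.ofReal_ne_top hcon
    have h3 : (ENNReal.ofReal (1/2) + ENNReal.ofReal (1/2) : ℝ≥0∞) = 1 := by
      rw [← ENNReal.ofReal_add (by norm_num) (by norm_num)]
      norm_num
    rw [h3] at h2
    exact absurd h1 (not_le.2 h2)
  -- numeric bookkeeping
  have hyb : ⟪η, y⟫ - p η ≤ b := by
    rw [hydef, inner_sub_right, real_inner_smul_right, real_inner_self_eq_norm_sq]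
    have h1 := hb η
    have h2 : ⟪η, x⟫ = ⟪x, η⟫ := real_inner_comm _ _
    nlinarith [sq_nonneg ‖η‖]
  have hρη : ρ * ‖η‖ ≤ (a-b)/4 := by
    have h1 : ρ ≤ (a-b)/(4*(‖η‖+1)) := min_le_right _ _
    have h2 : ρ * ‖η‖ ≤ ((a-b)/(4*(‖η‖+1))) * ‖η‖ :=
      mul_le_mul_of_nonneg_right h1 (norm_nonneg _)
    have h3 : ((a-b)/(4*(‖η‖+1))) * ‖η‖ ≤ (a-b)/4 := by
      rw [div_mul_eq_mul_div, div_le_div_iff₀ (by positivity) (by norm_num)]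
      nlinarith [norm_nonneg η]
    linarith
  set s1 : ℝ := ⟪η, y⟫ + ρ * ‖η‖ with hs1def
  set ε'' : ℝ := (a-b)/4 with hε''def
  have hε''pos : 0 < ε'' := by rw [hε''def]; linarith
  -- final chain
  filter_upwards [hgood, hball_ev, hLB η ε'' hε''pos, hr1,
    hrT.eventually_ge_atTop (Real.log 2 / ((a-b)/2))] with n hg hball hZlb hrn hlog
  have hrn0 : (0:ℝ) ≤ r n := le_trans zero_le_one hrn
  -- pointwise bound on the ball
  have hptwise : ∀ z ∈ Metric.ball y ρ,
      ENNReal.ofReal (Real.exp (-(r n) * s1)) * ENNReal.ofReal (Real.exp (r n * ⟪η, z⟫))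
        ≤ 1 := by
    intro z hz
    rw [← ENNReal.ofReal_mul (Real.exp_nonneg _), ← Real.exp_add]
    rw [← ENNReal.ofReal_one]
    apply ENNReal.ofReal_le_ofReal
    rw [← Real.exp_zero]
    apply Real.exp_le_exp.2
    have h1 : ⟪η, z - y⟫ = ⟪η, z⟫ - ⟪η, y⟫ := inner_sub_right _ _ _
    have h2 : ⟪η, z - y⟫ ≤ ‖η‖ * ‖z - y‖ := real_inner_le_norm _ _
    have h3 : ‖z - y‖ ≤ ρ := by
      rw [Metric.mem_ball, dist_eq_norm] at hz; exact hz.le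
    have h4 : ⟪η, z⟫ ≤ s1 := by
      rw [hs1def]
      have h5 : ‖η‖ * ‖z - y‖ ≤ ‖η‖ * ρ := mul_le_mul_of_nonneg_left h3 (norm_nonneg _)
      nlinarith [h1, h2]
    nlinarith [mul_le_mul_of_nonneg_left h4 hrn0]
  have hmeas_ball : MeasurableSet (Metric.ball y ρ) := measurableSet_ball
  have hint : ENNReal.ofReal (Real.exp (-(r n) * s1))
      * (∫⁻ z in Metric.ball y ρ, ENNReal.ofReal (Real.exp (r n * ⟪η, z⟫)) ∂μ n)
      ≤ μ n (Metric.ball y ρ) := by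
    rw [← lintegral_const_mul _ (measurable_expInner (r n) η)]
    calc (∫⁻ z in Metric.ball y ρ, ENNReal.ofReal (Real.exp (-(r n) * s1))
            * ENNReal.ofReal (Real.exp (r n * ⟪η, z⟫)) ∂μ n)
        ≤ ∫⁻ _ in Metric.ball y ρ, 1 ∂μ n := setLIntegral_mono measurable_one hptwise
      _ = μ n (Metric.ball y ρ) := setLIntegral_one _
  have hZball : (∫⁻ z in Metric.ball y ρ, ENNReal.ofReal (Real.exp (r n * ⟪η, z⟫)) ∂μ n)
      = Z (μ n) (r n) η * ν n (Metric.ball y ρ) := by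
    rw [hν_eq n hg]
    exact tilt_restrict hg.1 hg.2 hmeas_ball
  have hlower : ENNReal.ofReal (Real.exp (-(r n) * s1))
      * (ENNReal.ofReal (Real.exp (r n * (p η - ε''))) * ENNReal.ofReal (1/2))
      ≤ μ n O := by
    calc ENNReal.ofReal (Real.exp (-(r n) * s1))
          * (ENNReal.ofReal (Real.exp (r n * (p η - ε''))) * ENNReal.ofReal (1/2))
        ≤ ENNReal.ofReal (Real.exp (-(r n) * s1))
          * (Z (μ n) (r n) η * ν n (Metric.ball y ρ)) :=
          mul_le_mul' le_rfl (mul_le_mul' hZlb hball)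
      _ = ENNReal.ofReal (Real.exp (-(r n) * s1))
          * (∫⁻ z in Metric.ball y ρ, ENNReal.ofReal (Real.exp (r n * ⟪η, z⟫)) ∂μ n) := by
          rw [hZball]
      _ ≤ μ n (Metric.ball y ρ) := hint
      _ ≤ μ n O := measure_mono hballO
  refine le_trans ?_ hlower
  rw [← ENNReal.ofReal_mul (Real.exp_nonneg _), ← ENNReal.ofReal_mul (Real.exp_nonneg _)]
  apply ENNReal.ofReal_le_ofReal
  have hprod : Real.exp (-(r n) * s1) * (Real.exp (r n * (p η - ε'')) * (1/2))
      = Real.exp (-(r n) * s1 + r n * (p η - ε'')) * (1/2) := by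
    rw [Real.exp_add]; ring
  rw [hprod]
  -- real inequality: exp(-(r n)*a) ≤ exp(-(r n)*s1 + r n*(p η - ε'')) * (1/2)
  have hT : s1 - p η + ε'' ≤ b + (a-b)/2 := by
    have h1 : s1 - p η ≤ b + (a-b)/4 := by
      rw [hs1def]
      have := hyb
      linarith
    rw [hε''def]
    linarith
  have hgap : (a - b)/2 ≤ a - (s1 - p η + ε'') := by linarith
  have hlog2 : Real.log 2 ≤ r n * ((a-b)/2) := by
    rw [div_le_iff₀ (by linarith : (0:ℝ) < (a-b)/2)] at hlog
    linarith
  have h2exp : (2:ℝ) ≤ Real.exp (r n * (a - (s1 - p η + ε''))) := by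
    calc (2:ℝ) = Real.exp (Real.log 2) := (Real.exp_log two_pos).symm
      _ ≤ _ := by
          apply Real.exp_le_exp.2
          calc Real.log 2 ≤ r n * ((a-b)/2) := hlog2
            _ ≤ r n * (a - (s1 - p η + ε'')) := mul_le_mul_of_nonneg_left hgap hrn0
  have hfin : Real.exp (-(r n) * a) * 2 ≤ Real.exp (-(r n) * s1 + r n * (p η - ε'')) := by
    calc Real.exp (-(r n) * a) * 2
        ≤ Real.exp (-(r n) * a) * Real.exp (r n * (a - (s1 - p η + ε''))) :=
          mul_le_mul_of_nonneg_left h2exp (Real.exp_nonneg _)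
      _ = Real.exp (-(r n) * s1 + r n * (p η - ε'')) := by
          rw [← Real.exp_add]; congr 1; ring
  linarith [hfin]

end GEAux

open GEAux

/-- LDP(μ_n, r_n) with rate function `I`. -/
def IsLDP {𝒳 : Type*} [TopologicalSpace 𝒳] [MeasurableSpace 𝒳]
    (μ : ℕ → Measure 𝒳) (r : ℕ → ℝ) (I : 𝒳 → ℝ≥0∞) : Prop :=
  LowerSemicontinuous I ∧
  (∀ O : Set 𝒳, IsOpen O →
    -(⨅ x ∈ O, (I x : EReal)) ≤
      Filter.liminf (fun n => ((r n)⁻¹ : ℝ) * ENNReal.log (μ n O)) Filter.atTop) ∧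
  (∀ C : Set 𝒳, IsClosed C →
    Filter.limsup (fun n => ((r n)⁻¹ : ℝ) * ENNReal.log (μ n C)) Filter.atTop ≤
      -(⨅ x ∈ C, (I x : EReal)))

/-- The Gärtner–Ellis theorem on `ℝ^m`: if the normalized logarithmic moment generating
functions converge pointwise to a finite differentiable function `p`, then the LDP holds
with rate function the Legendre transform `p*`. -/
theorem gartner_ellis
    {m : ℕ}
    (μ : ℕ → Measure (EuclideanSpace ℝ (Fin m))) (hμ : ∀ n, IsProbabilityMeasure (μ n))
    (r : ℕ → ℝ) (hr : Tendsto r atTop atTop)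
    (p : EuclideanSpace ℝ (Fin m) → ℝ)
    (hp : ∀ θ : EuclideanSpace ℝ (Fin m),
      Tendsto
        (fun n => (((r n)⁻¹ : ℝ) *
          ENNReal.log (∫⁻ x, ENNReal.ofReal (Real.exp (r n * ⟪θ, x⟫)) ∂(μ n)) : EReal))
        atTop (𝓝 ((p θ : ℝ) : EReal)))
    (hdiff : Differentiable ℝ p) :
    IsLDP μ r (fun x => ⨆ θ : EuclideanSpace ℝ (Fin m), ENNReal.ofReal (⟪x, θ⟫ - p θ)) := by
  classical
  have hr1 : ∀ᶠ n in atTop, 1 ≤ r n := hr.eventually_ge_atTop 1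
  have hp' : ∀ θ, Tendsto
      (fun n => (((r n)⁻¹ : ℝ) * ENNReal.log (Z (μ n) (r n) θ) : EReal))
      atTop (𝓝 ((p θ : ℝ) : EReal)) := hp
  have hp0 : p 0 = 0 := by
    have h1 : Tendsto
        (fun n => (((r n)⁻¹ : ℝ) * ENNReal.log (Z (μ n) (r n) 0) : EReal))
        atTop (𝓝 ((p 0 : ℝ) : EReal)) := hp' 0
    have h2 : (fun n => (((r n)⁻¹ : ℝ) * ENNReal.log (Z (μ n) (r n) 0) : EReal))
        = fun _ => (0 : EReal) := by
      funext n
      have : Z (μ n) (r n) 0 = 1 := by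
        have := hμ n
        simp [Z, inner_zero_left]
      rw [this]
      simp
    rw [h2] at h1
    have h3 := tendsto_nhds_unique h1 tendsto_const_nhds
    exact_mod_cast h3
  have hUB : ExpUB μ r p := expUB_of_tendsto hr1 hp'
  have hLB : ExpLB μ r p := expLB_of_tendsto hr1 hp'
  refine ⟨?_, ?_, ?_⟩
  · apply lowerSemicontinuous_iSup
    intro θ
    apply Continuous.lowerSemicontinuous
    exact ENNReal.continuous_ofReal.comp
      ((continuous_id.inner continuous_const).sub continuous_const)
  · intro O hO
    rw [EReal.neg_le]
    refine le_iInf₂ fun x hx => ?_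
    rw [← EReal.neg_le]
    apply neg_le_of_forall
    intro a ha
    obtain ⟨b, _, hba, hb⟩ := rate_gt_translate ha
    exact neg_le_liminf_of_ev hr1 (lower_core hr hUB hLB hp0 hdiff hO hx hba hb)
  · intro C hC
    apply le_neg_of_forall
    intro a ha
    have h := fun z hz => rate_lt_translate hp0 (lt_of_lt_of_le ha (iInf₂_le z hz))
    exact limsup_le_neg_of_ev hr1 (ub_closed hUB hr hC h)
end
end

section
/- Let 𝒳 be a compact metric space, (μ_n) a sequence of Borel probability measures on 𝒳, and r_n → ∞. Then LDP(μ_n, r_n) holds for some rate function if and only if for every x ∈ 𝒳, lim_{d→0} limsup_{n→∞} (1/r_n) log μ_n(B_d(x)) = lim_{d→0} liminf_{n→∞} (1/r_n) log μ_n(B_d(x)), where B_d(x) is the open ball of radius d around x. In that case the rate function equals x ↦ −lim_{d→0} limsup_{n→∞} (1/r_n) log μ_n(B_d(x)). -/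
open MeasureTheory Filter Topology
open scoped ENNReal NNReal

noncomputable section

set_option linter.unusedSectionVars false
set_option linter.unusedVariables false

namespace LDPAux

/-- Inverse of the coercion `ℝ≥0∞ → EReal` on nonnegative elements. -/
def toENN (a : EReal) : ℝ≥0∞ := if a = ⊤ then ⊤ else ENNReal.ofReal a.toReal

lemma coe_toENN {a : EReal} (ha : 0 ≤ a) : ((toENN a : ℝ≥0∞) : EReal) = a := by
  rcases eq_or_ne a ⊤ with h | h
  · simp [toENN, h]
  · have hb : a ≠ ⊥ := fun hb => by simp [hb] at ha
    rw [toENN, if_neg h, EReal.coe_ennreal_ofReal]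
    have h0 : (0:ℝ) ≤ a.toReal := by
      have := EReal.coe_toReal h hb
      rw [← EReal.coe_le_coe_iff]
      simpa [this] using ha
    rw [max_eq_left h0, EReal.coe_toReal h hb]

variable {𝒳 : Type*} [MetricSpace 𝒳] [CompactSpace 𝒳] [MeasurableSpace 𝒳] [BorelSpace 𝒳]
  (μ : ℕ → Measure 𝒳) (r : ℕ → ℝ)

/-- The normalized log-measure sequence. -/
def F (s : Set 𝒳) (n : ℕ) : EReal := ((r n)⁻¹ : ℝ) * ENNReal.log (μ n s)

/-- The `d → 0` limit of the limsups over balls. -/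
def Lsup (x : 𝒳) : EReal := ⨅ (d : ℝ) (_ : 0 < d), limsup (F μ r (Metric.ball x d)) atTop

/-- The `d → 0` limit of the liminfs over balls. -/
def Linf (x : 𝒳) : EReal := ⨅ (d : ℝ) (_ : 0 < d), liminf (F μ r (Metric.ball x d)) atTop

variable {μ r}

lemma F_mono (hr : Tendsto r atTop atTop) {s t : Set 𝒳} (hst : s ⊆ t) :
    ∀ᶠ n in atTop, F μ r s n ≤ F μ r t n := by
  filter_upwards [hr.eventually_gt_atTop 0] with n hn
  exact mul_le_mul_of_nonneg_left (ENNReal.log_monotone (measure_mono hst))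
    (by exact_mod_cast (inv_nonneg.mpr hn.le : (0:ℝ) ≤ (r n)⁻¹))

lemma F_nonpos (hμ : ∀ n, IsProbabilityMeasure (μ n)) (hr : Tendsto r atTop atTop)
    (s : Set 𝒳) : ∀ᶠ n in atTop, F μ r s n ≤ 0 := by
  filter_upwards [hr.eventually_gt_atTop 0] with n hn
  have h1 : ENNReal.log (μ n s) ≤ 0 := by
    rw [← ENNReal.log_one]
    exact ENNReal.log_monotone prob_le_one
  calc ((r n)⁻¹ : ℝ) * ENNReal.log (μ n s) ≤ ((r n)⁻¹ : ℝ) * 0 :=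
        mul_le_mul_of_nonneg_left h1 (by exact_mod_cast (inv_nonneg.mpr hn.le : (0:ℝ) ≤ (r n)⁻¹))
    _ = 0 := mul_zero _

lemma limsup_F_nonpos (hμ : ∀ n, IsProbabilityMeasure (μ n)) (hr : Tendsto r atTop atTop)
    (s : Set 𝒳) : limsup (F μ r s) atTop ≤ 0 :=
  limsup_le_of_le (by isBoundedDefault) (F_nonpos hμ hr s)

lemma Lsup_nonpos (hμ : ∀ n, IsProbabilityMeasure (μ n)) (hr : Tendsto r atTop atTop)
    (x : 𝒳) : Lsup μ r x ≤ 0 :=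
  iInf₂_le_of_le 1 one_pos (limsup_F_nonpos hμ hr _)

lemma neg_Lsup_nonneg (hμ : ∀ n, IsProbabilityMeasure (μ n)) (hr : Tendsto r atTop atTop)
    (x : 𝒳) : (0:EReal) ≤ -(Lsup μ r x) := by
  rw [← neg_zero]
  exact EReal.neg_le_neg_iff.mpr (Lsup_nonpos hμ hr x)

lemma Linf_le_Lsup (x : 𝒳) : Linf μ r x ≤ Lsup μ r x :=
  iInf_mono fun d => iInf_mono fun hd => liminf_le_limsup

lemma eventually_measure_le (hr : Tendsto r atTop atTop) {s : Set 𝒳} {b : ℝ}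
    (h : limsup (F μ r s) atTop < (b : EReal)) :
    ∀ᶠ n in atTop, μ n s ≤ ENNReal.ofReal (Real.exp (r n * b)) := by
  filter_upwards [eventually_lt_of_limsup_lt h, hr.eventually_gt_atTop 0] with n hn hrn
  have hne : (r n : ℝ) ≠ 0 := hrn.ne'
  have key : ENNReal.log (μ n s) ≤ ((r n * b : ℝ) : EReal) := by
    have h2 : ((r n : ℝ) : EReal) * F μ r s n ≤ ((r n : ℝ) : EReal) * (b : EReal) :=
      mul_le_mul_of_nonneg_left hn.le (by exact_mod_cast hrn.le)
    have h3 : ((r n : ℝ) : EReal) * F μ r s n = ENNReal.log (μ n s) := by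
      rw [F, ← mul_assoc, ← EReal.coe_mul, mul_inv_cancel₀ hne, EReal.coe_one, one_mul]
    rw [h3, ← EReal.coe_mul] at h2
    exact h2
  have := EReal.exp_monotone key
  rwa [ENNReal.exp_log, EReal.exp_coe] at this

lemma limsup_F_le_of_cover (hμ : ∀ n, IsProbabilityMeasure (μ n)) (hr : Tendsto r atTop atTop)
    {C : Set 𝒳} (hC : IsClosed C) {b : ℝ}
    (h : ∀ x ∈ C, ∃ d, 0 < d ∧ limsup (F μ r (Metric.ball x d)) atTop < (b : EReal)) :
    limsup (F μ r C) atTop ≤ (b : EReal) := by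
  rcases C.eq_empty_or_nonempty with hCe | hCne
  · refine limsup_le_of_le (by isBoundedDefault) ?_
    filter_upwards [hr.eventually_gt_atTop 0] with n hn
    have : F μ r C n = ⊥ := by
      rw [F, hCe, measure_empty, ENNReal.log_zero, EReal.coe_mul_bot_of_pos (inv_pos.mpr hn)]
    rw [this]; exact bot_le
  · have h' : ∀ x : 𝒳, ∃ d : ℝ, 0 < d ∧
        (x ∈ C → limsup (F μ r (Metric.ball x d)) atTop < (b : EReal)) := by
      intro x
      by_cases hx : x ∈ C
      · obtain ⟨d, hd, hdb⟩ := h x hx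
        exact ⟨d, hd, fun _ => hdb⟩
      · exact ⟨1, one_pos, fun hx' => absurd hx' hx⟩
    choose D hD0 hDb using h'
    obtain ⟨t, htC, hcov⟩ := (hC.isCompact).elim_nhds_subcover
      (fun x => Metric.ball x (D x)) (fun x _ => Metric.ball_mem_nhds x (hD0 x))
    have htne : t.Nonempty := by
      obtain ⟨x0, hx0⟩ := hCne
      obtain ⟨x, hx, -⟩ := Set.mem_iUnion₂.mp (hcov hx0)
      exact ⟨x, hx⟩
    set k : ℕ := t.card with hk
    have hkpos : (0:ℝ) < k := by exact_mod_cast Finset.card_pos.mpr htne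
    have hev : ∀ᶠ n in atTop, ∀ x ∈ t, μ n (Metric.ball x (D x)) ≤
        ENNReal.ofReal (Real.exp (r n * b)) := by
      rw [eventually_all_finset]
      exact fun x hx => eventually_measure_le hr (hDb x (htC x hx))
    set g : ℕ → ℝ := fun n => (r n)⁻¹ * (Real.log k + r n * b) with hg
    have hFle : ∀ᶠ n in atTop, F μ r C n ≤ ((g n : ℝ) : EReal) := by
      filter_upwards [hev, hr.eventually_gt_atTop 0] with n hn hrn
      have hμC : μ n C ≤ (k : ℝ≥0∞) * ENNReal.ofReal (Real.exp (r n * b)) := by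
        calc μ n C ≤ μ n (⋃ x ∈ t, Metric.ball x (D x)) := measure_mono hcov
          _ ≤ ∑ x ∈ t, μ n (Metric.ball x (D x)) := measure_biUnion_finset_le _ _
          _ ≤ k • ENNReal.ofReal (Real.exp (r n * b)) :=
              Finset.sum_le_card_nsmul _ _ _ (fun x hx => hn x hx)
          _ = (k : ℝ≥0∞) * ENNReal.ofReal (Real.exp (r n * b)) := nsmul_eq_mul _ _
      have hlog : ENNReal.log (μ n C) ≤ ((Real.log k + r n * b : ℝ) : EReal) := by
        refine le_trans (ENNReal.log_monotone hμC) ?_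
        rw [ENNReal.log_mul_add, ← ENNReal.ofReal_natCast,
          ENNReal.log_ofReal_of_pos hkpos,
          ENNReal.log_ofReal_of_pos (Real.exp_pos _), Real.log_exp, EReal.coe_add]
      calc F μ r C n ≤ ((r n)⁻¹ : ℝ) * ((Real.log k + r n * b : ℝ) : EReal) :=
            mul_le_mul_of_nonneg_left hlog
              (by exact_mod_cast (inv_nonneg.mpr hrn.le : (0:ℝ) ≤ (r n)⁻¹))
        _ = ((g n : ℝ) : EReal) := by rw [← EReal.coe_mul]
    have hgb : Tendsto g atTop (𝓝 b) := by
      have h1 : Tendsto (fun n => (r n)⁻¹) atTop (𝓝 0) := hr.inv_tendsto_atTop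
      have h2 : Tendsto (fun n => (r n)⁻¹ * Real.log k + b) atTop (𝓝 (0 * Real.log k + b)) :=
        (h1.mul_const _).add_const b
      rw [zero_mul, zero_add] at h2
      refine h2.congr' ?_
      filter_upwards [hr.eventually_gt_atTop 0] with n hn
      rw [hg]; field_simp
    have hgb' : Tendsto (fun n => ((g n : ℝ) : EReal)) atTop (𝓝 (b : EReal)) :=
      EReal.tendsto_coe.mpr hgb
    calc limsup (F μ r C) atTop ≤ limsup (fun n => ((g n : ℝ) : EReal)) atTop :=
          limsup_le_limsup hFle
      _ = (b : EReal) := hgb'.limsup_eq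

lemma neg_I_le_Linf {I : 𝒳 → ℝ≥0∞} (hI : IsLDP μ r I) (x : 𝒳) :
    -(I x : EReal) ≤ Linf μ r x := by
  refine le_iInf₂ fun d hd => ?_
  refine le_trans ?_ (hI.2.1 (Metric.ball x d) Metric.isOpen_ball)
  exact EReal.neg_le_neg_iff.mpr (iInf₂_le x (Metric.mem_ball_self hd))

lemma Lsup_le_neg_I (hμ : ∀ n, IsProbabilityMeasure (μ n)) (hr : Tendsto r atTop atTop)
    {I : 𝒳 → ℝ≥0∞} (hI : IsLDP μ r I) (x : 𝒳) :
    Lsup μ r x ≤ -(I x : EReal) := by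
  obtain ⟨hlsc, hopen, hclosed⟩ := hI
  refine EReal.le_of_forall_lt_iff_le.mp fun z hz => ?_
  by_cases hz0 : 0 ≤ z
  · exact le_trans (Lsup_nonpos hμ hr x) (by exact_mod_cast hz0)
  · push_neg at hz0
    set c : ℝ≥0∞ := ENNReal.ofReal (-z) with hc
    have hcz : (c : EReal) = -(z : EReal) := by
      rw [hc, EReal.coe_ennreal_ofReal, max_eq_left (by linarith), ← EReal.coe_neg]
    have hcI : c < I x := by
      rw [← EReal.coe_ennreal_lt_coe_ennreal_iff, hcz]
      rw [show (I x : EReal) = -(-(I x : EReal)) from (neg_neg _).symm]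
      exact EReal.neg_lt_neg_iff.mpr hz
    obtain ⟨ε, hε, hball⟩ := Metric.eventually_nhds_iff.mp (hlsc x c hcI)
    have h1 : Lsup μ r x ≤ limsup (F μ r (Metric.ball x (ε/2))) atTop :=
      iInf₂_le (ε/2) (half_pos hε)
    have h2 : limsup (F μ r (Metric.ball x (ε/2))) atTop ≤
        limsup (F μ r (Metric.closedBall x (ε/2))) atTop :=
      limsup_le_limsup (F_mono hr Metric.ball_subset_closedBall)
    have h3 : limsup (F μ r (Metric.closedBall x (ε/2))) atTop ≤
        -(⨅ y ∈ Metric.closedBall x (ε/2), (I y : EReal)) :=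
      hclosed _ Metric.isClosed_closedBall
    have h4 : (c : EReal) ≤ ⨅ y ∈ Metric.closedBall x (ε/2), (I y : EReal) := by
      refine le_iInf₂ fun y hy => ?_
      have : dist y x < ε := lt_of_le_of_lt (Metric.mem_closedBall.mp hy) (by linarith)
      exact EReal.coe_ennreal_le_coe_ennreal_iff.mpr (hball this).le
    have h5 : -(⨅ y ∈ Metric.closedBall x (ε/2), (I y : EReal)) ≤ (z : EReal) := by
      rw [show (z : EReal) = -(c : EReal) by rw [hcz, neg_neg]]
      exact EReal.neg_le_neg_iff.mpr h4
    exact h1.trans (h2.trans (h3.trans h5))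

lemma isLDP_of_eq (hμ : ∀ n, IsProbabilityMeasure (μ n)) (hr : Tendsto r atTop atTop)
    (heq : ∀ x : 𝒳, Lsup μ r x = Linf μ r x) :
    IsLDP μ r (fun x => toENN (-(Lsup μ r x))) := by
  set I : 𝒳 → ℝ≥0∞ := fun x => toENN (-(Lsup μ r x)) with hIdef
  have hcoe : ∀ x, (I x : EReal) = -(Lsup μ r x) :=
    fun x => coe_toENN (neg_Lsup_nonneg hμ hr x)
  refine ⟨?_, ?_, ?_⟩
  · -- lower semicontinuity
    intro x c hc
    have hc1 : (c : EReal) < -(Lsup μ r x) := by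
      rw [← hcoe x]
      exact EReal.coe_ennreal_lt_coe_ennreal_iff.mpr hc
    have hc' : Lsup μ r x < -(c : EReal) := by
      rw [show Lsup μ r x = -(-(Lsup μ r x)) from (neg_neg _).symm]
      exact EReal.neg_lt_neg_iff.mpr hc1
    rw [Lsup, iInf_lt_iff] at hc'
    obtain ⟨d, hc'⟩ := hc'
    rw [iInf_lt_iff] at hc'
    obtain ⟨hd, hlim⟩ := hc'
    refine Metric.eventually_nhds_iff.mpr ⟨d/2, half_pos hd, fun y hy => ?_⟩
    have hsub : Metric.ball y (d/2) ⊆ Metric.ball x d :=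
      Metric.ball_subset_ball' (by linarith)
    have h1 : Lsup μ r y ≤ limsup (F μ r (Metric.ball x d)) atTop :=
      (iInf₂_le (d/2) (half_pos hd)).trans (limsup_le_limsup (F_mono hr hsub))
    have h2 : Lsup μ r y < -(c : EReal) := lt_of_le_of_lt h1 hlim
    show c < I y
    rw [← EReal.coe_ennreal_lt_coe_ennreal_iff, hcoe y]
    rw [show (c : EReal) = -(-(c : EReal)) from (neg_neg _).symm]
    exact EReal.neg_lt_neg_iff.mpr h2
  · -- lower bound for open sets
    intro O hO
    rw [EReal.neg_le]
    refine le_iInf₂ fun x hx => ?_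
    rw [← EReal.neg_le, hcoe x, neg_neg]
    obtain ⟨d, hd, hsub⟩ := Metric.isOpen_iff.mp hO x hx
    calc Lsup μ r x = Linf μ r x := heq x
      _ ≤ liminf (F μ r (Metric.ball x d)) atTop := iInf₂_le d hd
      _ ≤ liminf (fun n => ((r n)⁻¹ : ℝ) * ENNReal.log (μ n O)) atTop :=
          liminf_le_liminf (F_mono hr hsub)
  · -- upper bound for closed sets
    intro C hC
    refine EReal.le_of_forall_lt_iff_le.mp fun z hz => ?_
    refine limsup_F_le_of_cover hμ hr hC fun x hx => ?_
    have h1 : -(I x : EReal) ≤ -(⨅ y ∈ C, (I y : EReal)) :=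
      EReal.neg_le_neg_iff.mpr (iInf₂_le x hx)
    have h2 : Lsup μ r x < (z : EReal) := by
      rw [← neg_neg (Lsup μ r x), ← hcoe x]
      exact lt_of_le_of_lt h1 hz
    rw [Lsup, iInf_lt_iff] at h2
    obtain ⟨d, h2⟩ := h2
    rw [iInf_lt_iff] at h2
    obtain ⟨hd, h2⟩ := h2
    exact ⟨d, hd, h2⟩

end LDPAux

/-- On a compact metric space an LDP holds (for some rate function) iff for every point the
`d → 0` limits of the normalized `limsup` and `liminf` of `log μₙ(B_d(x))` coincide; the rate
function is then minus this common limit.  (Since these quantities are monotone in `d`, the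
limit as `d → 0` is the infimum over `d > 0`.) -/
theorem ldp_iff_ball_limits
    {𝒳 : Type*} [MetricSpace 𝒳] [CompactSpace 𝒳] [MeasurableSpace 𝒳] [BorelSpace 𝒳]
    (μ : ℕ → Measure 𝒳) (hμ : ∀ n, IsProbabilityMeasure (μ n))
    (r : ℕ → ℝ) (hr : Tendsto r atTop atTop) :
    ((∃ I : 𝒳 → ℝ≥0∞, IsLDP μ r I) ↔
      (∀ x : 𝒳,
        (⨅ (d : ℝ) (_ : 0 < d),
          Filter.limsup
            (fun n => (((r n)⁻¹ : ℝ) * ENNReal.log (μ n (Metric.ball x d)) : EReal)) atTop) =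
        (⨅ (d : ℝ) (_ : 0 < d),
          Filter.liminf
            (fun n => (((r n)⁻¹ : ℝ) * ENNReal.log (μ n (Metric.ball x d)) : EReal)) atTop)))
    ∧
    (∀ I : 𝒳 → ℝ≥0∞, IsLDP μ r I → ∀ x : 𝒳,
      (I x : EReal) =
        -(⨅ (d : ℝ) (_ : 0 < d),
          Filter.limsup
            (fun n => (((r n)⁻¹ : ℝ) * ENNReal.log (μ n (Metric.ball x d)) : EReal)) atTop)) := by
  have ident : ∀ I : 𝒳 → ℝ≥0∞, IsLDP μ r I → ∀ x : 𝒳,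
      (I x : EReal) = -(LDPAux.Lsup μ r x) ∧ LDPAux.Lsup μ r x = LDPAux.Linf μ r x := by
    intro I hI x
    have ha := LDPAux.neg_I_le_Linf hI x
    have hb := LDPAux.Lsup_le_neg_I hμ hr hI x
    have hle := LDPAux.Linf_le_Lsup (μ := μ) (r := r) x
    have h1 : LDPAux.Lsup μ r x = -(I x : EReal) :=
      le_antisymm hb (ha.trans hle)
    refine ⟨by rw [h1, neg_neg], le_antisymm (h1.le.trans ha) hle⟩
  constructor
  · constructor
    · rintro ⟨I, hI⟩ x
      exact (ident I hI x).2
    · intro heq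
      exact ⟨_, LDPAux.isLDP_of_eq hμ hr heq⟩
  · intro I hI x
    exact (ident I hI x).1

end
end

section
/- (Fundamental Theorem of Optimal Transport) Let X, Y ⊂ ℝ^n be compact, μ ∈ P(X), ν ∈ P(Y), and let c(x,y) = −⟨x,y⟩. For γ ∈ Π(μ,ν), the following are equivalent: (i) γ minimizes ∫_{X×Y} c dγ̃ over γ̃ ∈ Π(μ,ν); (ii) the support of γ is cyclically monotone; (iii) there exists a convex function f : ℝ^n → ℝ such that supp γ ⊆ gr(∂f) := {(x,y) : y ∈ ∂f(x)}. -/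
open MeasureTheory Filter Topology RealInnerProductSpace
open scoped ENNReal NNReal

noncomputable section

/-- A set `A ⊆ ℝ^n × ℝ^n` is cyclically monotone if for all finite families of points of `A`
and all permutations `σ`, `Σ −⟨xᵢ,yᵢ⟩ ≤ Σ −⟨xᵢ,y_{σ(i)}⟩`. -/
def CyclicallyMonotone {n : ℕ} (A : Set (EuclideanSpace ℝ (Fin n) × EuclideanSpace ℝ (Fin n))) :
    Prop :=
  ∀ (m : ℕ) (p : Fin m → EuclideanSpace ℝ (Fin n) × EuclideanSpace ℝ (Fin n)),
    (∀ i, p i ∈ A) → ∀ σ : Equiv.Perm (Fin m),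
      ∑ i, -⟪(p i).1, (p i).2⟫ ≤ ∑ i, -⟪(p i).1, (p (σ i)).2⟫

/-- The subdifferential of `f` at `x`. -/
def SubDiff {n : ℕ} (f : EuclideanSpace ℝ (Fin n) → ℝ) (x : EuclideanSpace ℝ (Fin n)) :
    Set (EuclideanSpace ℝ (Fin n)) :=
  {y | ∀ z, f x + ⟪z - x, y⟫ ≤ f z}

/-- The (topological) support of a measure: points all of whose open neighborhoods have
positive measure. -/
def msupport {X : Type*} [TopologicalSpace X] [MeasurableSpace X] (γ : Measure X) : Set X :=
  {p | ∀ U : Set X, IsOpen U → p ∈ U → 0 < γ U}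

-- generic measure lemmas
lemma msupport_subset_closed {α : Type*} [TopologicalSpace α] [MeasurableSpace α]
    {γ : Measure α} {C : Set α} (hC : IsClosed C) (h : γ Cᶜ = 0) : msupport γ ⊆ C := by
  intro p hp
  by_contra hpc
  have := hp Cᶜ hC.isOpen_compl hpc
  simp [h] at this

lemma measure_compl_msupport {α : Type*} [TopologicalSpace α] [MeasurableSpace α]
    [SecondCountableTopology α] (γ : Measure α) : γ (msupport γ)ᶜ = 0 := by
  have hU : (msupport γ)ᶜ = ⋃₀ {U : Set α | IsOpen U ∧ γ U = 0} := by
    ext p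
    simp only [Set.mem_compl_iff, msupport, Set.mem_setOf_eq, Set.mem_sUnion]
    constructor
    · intro hp
      push_neg at hp
      obtain ⟨U, hUo, hpU, hγU⟩ := hp
      exact ⟨U, ⟨hUo, le_antisymm hγU zero_le⟩, hpU⟩
    · rintro ⟨U, ⟨hUo, hγU⟩, hpU⟩ hp
      have := hp U hUo hpU
      simp [hγU] at this
  obtain ⟨T, hTc, hTsub, hTun⟩ := TopologicalSpace.isOpen_sUnion_countable
    {U : Set α | IsOpen U ∧ γ U = 0} (fun U hU => hU.1)
  rw [hU, ← hTun]
  refine measure_sUnion_null_iff hTc |>.2 fun U hUT => (hTsub hUT).2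

lemma integrable_of_compl_null {α : Type*} [TopologicalSpace α] [MeasurableSpace α]
    [OpensMeasurableSpace α] {γ : Measure α} [IsFiniteMeasure γ] {K : Set α} (hK : IsCompact K)
    {h : α → ℝ} (hc : Continuous h) (h0 : γ Kᶜ = 0) : Integrable h γ := by
  obtain ⟨C, hC⟩ := hK.exists_bound_of_continuousOn hc.continuousOn
  refine ⟨hc.aestronglyMeasurable, ?_⟩
  have hae : ∀ᵐ x ∂γ, ‖h x‖ ≤ C := by
    rw [ae_iff]
    refine measure_mono_null (fun x hx => ?_) h0
    simp only [Set.mem_setOf_eq, not_le] at hx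
    intro hxK
    exact absurd (hC x hxK) (not_le.2 hx)
  exact (hasFiniteIntegral_const C).mono' hae

section Rockafellar

variable {n : ℕ}

local notation "E" => EuclideanSpace ℝ (Fin n)

/-- The value of the chain `q 0, …, q k` evaluated towards the endpoint `x`. -/
def chainW (q : ℕ → E × E) (k : ℕ) (x : E) : ℝ :=
  (∑ i ∈ Finset.range k, ⟪(q (i + 1)).1 - (q i).1, (q i).2⟫) + ⟪x - (q k).1, (q k).2⟫

lemma chainW_diff (q : ℕ → E × E) (k : ℕ) (x x' : E) :
    chainW q k x = chainW q k x' + ⟪x - x', (q k).2⟫ := by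
  simp only [chainW, inner_sub_left]
  ring

lemma chainW_affine (q : ℕ → E × E) (k : ℕ) {a b : ℝ} (hab : a + b = 1) (u v : E) :
    chainW q k (a • u + b • v) = a * chainW q k u + b * chainW q k v := by
  simp only [chainW, inner_sub_left, inner_add_left, real_inner_smul_left]
  linear_combination (⟪(q k).1, (q k).2⟫
    - ∑ i ∈ Finset.range k, (⟪(q (i + 1)).1, (q i).2⟫ - ⟪(q i).1, (q i).2⟫)) * hab

lemma chainW_closing {A : Set (E × E)} (hA : CyclicallyMonotone A) (q : ℕ → E × E) (k : ℕ)
    (hq : ∀ i ≤ k, q i ∈ A) : chainW q k (q 0).1 ≤ 0 := by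
  have hcm := hA (k + 1) (fun i => q i.val)
    (fun i => hq i.val (Nat.le_of_lt_succ i.isLt)) (Equiv.subRight (1 : Fin (k + 1)))
  simp only [Equiv.subRight_apply] at hcm
  -- hcm : ∑ i, -⟪(q i).1, (q i).2⟫ ≤ ∑ i, -⟪(q i).1, (q (i-1)).2⟫
  set g : Fin (k + 1) → ℝ := fun i => ⟪(q ((i + 1 : Fin (k + 1)) : ℕ)).1, (q (i : ℕ)).2⟫ with hg
  have claim1 : ∑ i, g i
      = (∑ i ∈ Finset.range k, ⟪(q (i + 1)).1, (q i).2⟫) + ⟪(q 0).1, (q k).2⟫ := by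
    rw [Fin.sum_univ_castSucc]
    congr 1
    · rw [← Fin.sum_univ_eq_sum_range]
      refine Finset.sum_congr rfl fun j _ => ?_
      have hlt : Fin.castSucc j < Fin.last k := Fin.castSucc_lt_last j
      have : ((Fin.castSucc j + 1 : Fin (k + 1)) : ℕ) = (j : ℕ) + 1 :=
        Fin.val_add_one_of_lt hlt
      simp [g, this]
    · have : (Fin.last k + 1 : Fin (k + 1)) = 0 := by
        simp [Fin.last_add_one]
      simp [g, this]
  have claim2 : ∑ i, g i = ∑ i : Fin (k + 1), ⟪(q (i : ℕ)).1, (q ((i - 1 : Fin (k+1)) : ℕ)).2⟫ := by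
    rw [← Equiv.sum_comp (Equiv.addRight (1 : Fin (k + 1)))
      (fun i => ⟪(q (i : ℕ)).1, (q ((i - 1 : Fin (k+1)) : ℕ)).2⟫)]
    refine Finset.sum_congr rfl fun i _ => ?_
    simp [g, Equiv.addRight]
  have hW : chainW q k (q 0).1
      = ∑ i, g i - ∑ i : Fin (k + 1), ⟪(q (i : ℕ)).1, (q (i : ℕ)).2⟫ := by
    rw [claim1, Fin.sum_univ_eq_sum_range (fun i => ⟪(q i).1, (q i).2⟫), Finset.sum_range_succ]
    simp only [chainW, inner_sub_left, Finset.sum_sub_distrib]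
    ring
  rw [hW, claim2]
  have h1 : ∑ i : Fin (k+1), ⟪(q (i : ℕ)).1, (q ((i - 1 : Fin (k+1)) : ℕ)).2⟫
      ≤ ∑ i : Fin (k+1), ⟪(q (i : ℕ)).1, (q (i : ℕ)).2⟫ := by
    have := hcm
    simp only [Finset.sum_neg_distrib] at this
    linarith [this]
  linarith

end Rockafellar

section Rock2

variable {n : ℕ}

local notation "E" => EuclideanSpace ℝ (Fin n)

def chainSet (A : Set (E × E)) (p₀ : E × E) (x : E) : Set ℝ :=
  {r | ∃ (k : ℕ) (q : ℕ → E × E), (∀ i ≤ k, q i ∈ A) ∧ q 0 = p₀ ∧ r = chainW q k x}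

lemma chainSet_nonempty {A : Set (E × E)} {p₀ : E × E} (hp₀ : p₀ ∈ A) (x : E) :
    (chainSet A p₀ x).Nonempty := by
  refine ⟨⟪x - p₀.1, p₀.2⟫, 0, fun _ => p₀, fun i _ => hp₀, rfl, ?_⟩
  simp [chainW]

lemma chainSet_le {A : Set (E × E)} (hA : CyclicallyMonotone A) {p₀ : E × E} (hp₀ : p₀ ∈ A)
    {R : ℝ} (hR : ∀ p ∈ A, ‖p.2‖ ≤ R) (x : E) :
    ∀ r ∈ chainSet A p₀ x, r ≤ R * ‖x - p₀.1‖ := by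
  rintro r ⟨k, q, hq, h0, rfl⟩
  have hclose : chainW q k (q 0).1 ≤ 0 := chainW_closing hA q k hq
  have hdiff := chainW_diff q k x (q 0).1
  have hin : ⟪x - (q 0).1, (q k).2⟫ ≤ ‖x - (q 0).1‖ * ‖(q k).2‖ := real_inner_le_norm _ _
  have hRk : ‖(q k).2‖ ≤ R := hR _ (hq k le_rfl)
  have hle : ‖x - (q 0).1‖ * ‖(q k).2‖ ≤ ‖x - (q 0).1‖ * R :=
    mul_le_mul_of_nonneg_left hRk (norm_nonneg _)
  rw [h0] at hdiff hclose hin hle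
  rw [mul_comm ‖x - p₀.1‖ R] at hle
  linarith

lemma rockafellar {A : Set (E × E)} (hA : CyclicallyMonotone A)
    (hbd : ∃ R : ℝ, ∀ p ∈ A, ‖p.2‖ ≤ R) :
    ∃ f : E → ℝ, ConvexOn ℝ Set.univ f ∧ A ⊆ {p : E × E | p.2 ∈ SubDiff f p.1} := by
  rcases Set.eq_empty_or_nonempty A with hAe | ⟨p₀, hp₀⟩
  · exact ⟨0, convexOn_const _ convex_univ, by simp [hAe]⟩
  obtain ⟨R, hR⟩ := hbd
  set f : E → ℝ := fun x => sSup (chainSet A p₀ x) with hf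
  have hbdd : ∀ x : E, BddAbove (chainSet A p₀ x) :=
    fun x => ⟨R * ‖x - p₀.1‖, fun r hr => chainSet_le hA hp₀ hR x r hr⟩
  have hne : ∀ x : E, (chainSet A p₀ x).Nonempty := chainSet_nonempty hp₀
  refine ⟨f, ⟨convex_univ, ?_⟩, ?_⟩
  · intro u _ v _ a b ha hb hab
    refine csSup_le (hne _) ?_
    rintro r ⟨k, q, hq, h0, rfl⟩
    rw [chainW_affine q k hab u v]
    have h1 : chainW q k u ≤ f u := le_csSup (hbdd u) ⟨k, q, hq, h0, rfl⟩
    have h2 : chainW q k v ≤ f v := le_csSup (hbdd v) ⟨k, q, hq, h0, rfl⟩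
    have := add_le_add (mul_le_mul_of_nonneg_left h1 ha) (mul_le_mul_of_nonneg_left h2 hb)
    simpa [smul_eq_mul] using this
  · rintro ⟨xb, yb⟩ hmem
    intro z
    have h1 : ∀ r ∈ chainSet A p₀ xb, r + ⟪z - xb, yb⟫ ≤ f z := by
      rintro r ⟨k, q, hq, h0, rfl⟩
      set q' : ℕ → E × E := fun i => if i = k + 1 then (xb, yb) else q i with hq'
      have hq'mem : ∀ i ≤ k + 1, q' i ∈ A := by
        intro i hi
        by_cases h : i = k + 1
        · simpa [q', h] using hmem
        · have : i ≤ k := Nat.lt_succ_iff.1 (lt_of_le_of_ne hi h)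
          simpa [q', h] using hq i this
      have hq'0 : q' 0 = p₀ := by simpa [q'] using h0
      have hW : chainW q' (k + 1) z = chainW q k xb + ⟪z - xb, yb⟫ := by
        simp only [chainW, Finset.sum_range_succ]
        have e1 : ∀ i ∈ Finset.range k,
            ⟪(q' (i + 1)).1 - (q' i).1, (q' i).2⟫ = ⟪(q (i + 1)).1 - (q i).1, (q i).2⟫ := by
          intro i hi
          have hik : i < k := Finset.mem_range.1 hi
          have h1 : i + 1 ≠ k + 1 := by omega
          have h2 : i ≠ k + 1 := by omega
          simp [q', h1, h2, hik.ne]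
        rw [Finset.sum_congr rfl e1]
        have hk1 : q' (k + 1) = (xb, yb) := by simp [q']
        have hkk : q' k = q k := by simp [q']
        rw [hk1, hkk]
        try ring
      exact le_csSup (hbdd z) ⟨k + 1, q', hq'mem, hq'0, hW.symm⟩
    have h2 : f xb ≤ f z - ⟪z - xb, yb⟫ := by
      refine csSup_le (hne _) fun r hr => ?_
      linarith [h1 r hr]
    show f xb + ⟪z - xb, yb⟫ ≤ f z
    linarith

end Rock2

section MainSetting

variable {n : ℕ}

local notation "E" => EuclideanSpace ℝ (Fin n)

lemma prob_of_marg {μ : Measure E} (hμ : IsProbabilityMeasure μ)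
    {ρ : Measure (E × E)} (h1 : ρ.map Prod.fst = μ) : IsProbabilityMeasure ρ := by
  constructor
  have h2 : ρ Set.univ = μ Set.univ := by
    rw [← h1, Measure.map_apply measurable_fst MeasurableSet.univ, Set.preimage_univ]
  rw [h2, measure_univ]

lemma compl_null_of_marg {X Y : Set E} (hX : IsCompact X) (hY : IsCompact Y)
    {μ ν : Measure E} (hμ : IsProbabilityMeasure μ) (hν : IsProbabilityMeasure ν)
    (hμX : μ X = 1) (hνY : ν Y = 1)
    {ρ : Measure (E × E)} (h1 : ρ.map Prod.fst = μ) (h2 : ρ.map Prod.snd = ν) :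
    ρ ((X ×ˢ Y)ᶜ) = 0 := by
  have hXm : MeasurableSet X := hX.isClosed.measurableSet
  have hYm : MeasurableSet Y := hY.isClosed.measurableSet
  have hsub : (X ×ˢ Y)ᶜ ⊆ (Prod.fst ⁻¹' Xᶜ) ∪ (Prod.snd ⁻¹' Yᶜ) := by
    intro p hp
    simp only [Set.mem_compl_iff, Set.mem_prod, not_and_or] at hp
    rcases hp with h | h
    · exact Or.inl h
    · exact Or.inr h
  refine measure_mono_null hsub (le_antisymm ?_ zero_le)
  refine le_trans (measure_union_le _ _) ?_
  have e1 : ρ (Prod.fst ⁻¹' Xᶜ) = μ Xᶜ := by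
    rw [← h1, Measure.map_apply measurable_fst hXm.compl]
  have e2 : ρ (Prod.snd ⁻¹' Yᶜ) = ν Yᶜ := by
    rw [← h2, Measure.map_apply measurable_snd hYm.compl]
  rw [e1, e2, prob_compl_eq_zero_iff hXm |>.2 hμX, prob_compl_eq_zero_iff hYm |>.2 hνY]
  simp

lemma cost_continuous : Continuous fun p : E × E => -⟪p.1, p.2⟫ :=
  (continuous_fst.inner continuous_snd).neg

lemma opt_of_subdiff (X Y : Set E) (hX : IsCompact X) (hY : IsCompact Y)
    (μ ν : Measure E) (hμ : IsProbabilityMeasure μ) (hν : IsProbabilityMeasure ν)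
    (hμX : μ X = 1) (hνY : ν Y = 1)
    (γ : Measure (E × E)) (hγ₁ : γ.map Prod.fst = μ) (hγ₂ : γ.map Prod.snd = ν)
    (f : E → ℝ) (hf : ConvexOn ℝ Set.univ f)
    (hsub : msupport γ ⊆ {p : E × E | p.2 ∈ SubDiff f p.1}) :
    ∀ γ' : Measure (E × E), γ'.map Prod.fst = μ → γ'.map Prod.snd = ν →
      ∫ p, -⟪p.1, p.2⟫ ∂γ ≤ ∫ p, -⟪p.1, p.2⟫ ∂γ' := by
  intro γ' hγ'₁ hγ'₂
  haveI hγp : IsProbabilityMeasure γ := prob_of_marg hμ hγ₁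
  haveI hγ'p : IsProbabilityMeasure γ' := prob_of_marg hμ hγ'₁
  have hγnull : γ ((X ×ˢ Y)ᶜ) = 0 := compl_null_of_marg hX hY hμ hν hμX hνY hγ₁ hγ₂
  have hγ'null : γ' ((X ×ˢ Y)ᶜ) = 0 := compl_null_of_marg hX hY hμ hν hμX hνY hγ'₁ hγ'₂
  have hsuppXY : msupport γ ⊆ X ×ˢ Y :=
    msupport_subset_closed (hX.isClosed.prod hY.isClosed) hγnull
  have hXne : X.Nonempty := by
    rcases Set.eq_empty_or_nonempty X with h | h
    · exfalso; rw [h, measure_empty] at hμX; exact one_ne_zero hμX.symm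
    · exact h
  have hfc : Continuous f := by
    have := hf.continuousOn isOpen_univ
    rwa [continuousOn_univ] at this
  -- the conjugate-type function
  set g : E → ℝ := fun y => sSup ((fun x => ⟪x, y⟫ - f x) '' X) with hg
  have hgne : ∀ y : E, ((fun x => ⟪x, y⟫ - f x) '' X).Nonempty := fun y => hXne.image _
  have hgbdd : ∀ y : E, BddAbove ((fun x => ⟪x, y⟫ - f x) '' X) := by
    intro y
    exact (hX.image ((continuous_id.inner continuous_const).sub hfc)).bddAbove
  have hgconv : ConvexOn ℝ Set.univ g := by
    refine ⟨convex_univ, fun u _ v _ a b ha hb hab => ?_⟩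
    refine csSup_le (hgne _) ?_
    rintro r ⟨x, hx, rfl⟩
    have h1 : ⟪x, u⟫ - f x ≤ g u := le_csSup (hgbdd u) ⟨x, hx, rfl⟩
    have h2 : ⟪x, v⟫ - f x ≤ g v := le_csSup (hgbdd v) ⟨x, hx, rfl⟩
    show ⟪x, a • u + b • v⟫ - f x ≤ a • g u + b • g v
    rw [inner_add_right, real_inner_smul_right, real_inner_smul_right, smul_eq_mul, smul_eq_mul]
    have hfx : a * f x + b * f x = f x := by rw [← add_mul, hab, one_mul]
    nlinarith [mul_le_mul_of_nonneg_left h1 ha, mul_le_mul_of_nonneg_left h2 hb, hfx]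
  have hgc : Continuous g := by
    have := hgconv.continuousOn isOpen_univ
    rwa [continuousOn_univ] at this
  have hFY : ∀ x ∈ X, ∀ y : E, ⟪x, y⟫ - f x ≤ g y := fun x hx y => le_csSup (hgbdd y) ⟨x, hx, rfl⟩
  have heq : ∀ p ∈ msupport γ, g p.2 = ⟪p.1, p.2⟫ - f p.1 := by
    intro p hp
    refine le_antisymm ?_ (hFY p.1 (hsuppXY hp).1 p.2)
    refine csSup_le (hgne _) ?_
    rintro r ⟨z, hz, rfl⟩
    have hsd : f p.1 + ⟪z - p.1, p.2⟫ ≤ f z := hsub hp z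
    rw [inner_sub_left] at hsd
    show ⟪z, p.2⟫ - f z ≤ ⟪p.1, p.2⟫ - f p.1
    linarith
  -- integrability
  have hKc : IsCompact (X ×ˢ Y) := hX.prod hY
  have hc_cont : Continuous fun p : E × E => -⟪p.1, p.2⟫ := cost_continuous
  have hh_cont : Continuous fun p : E × E => -(f p.1 + g p.2) :=
    ((hfc.comp continuous_fst).add (hgc.comp continuous_snd)).neg
  have hInt : ∀ (ρ : Measure (E × E)), IsProbabilityMeasure ρ → ρ ((X ×ˢ Y)ᶜ) = 0 →
      Integrable (fun p : E × E => -⟪p.1, p.2⟫) ρ ∧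
      Integrable (fun p : E × E => -(f p.1 + g p.2)) ρ ∧
      Integrable (fun p : E × E => f p.1) ρ ∧ Integrable (fun p : E × E => g p.2) ρ := by
    intro ρ hρ hρnull
    haveI := hρ
    exact ⟨integrable_of_compl_null hKc hc_cont hρnull,
      integrable_of_compl_null hKc hh_cont hρnull,
      integrable_of_compl_null hKc (hfc.comp continuous_fst) hρnull,
      integrable_of_compl_null hKc (hgc.comp continuous_snd) hρnull⟩
  obtain ⟨hIγc, hIγh, hIγf, hIγg⟩ := hInt γ hγp hγnull
  obtain ⟨hIγ'c, hIγ'h, hIγ'f, hIγ'g⟩ := hInt γ' hγ'p hγ'null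
  -- the common constant
  have hconst : ∀ (ρ : Measure (E × E)), ρ.map Prod.fst = μ → ρ.map Prod.snd = ν →
      Integrable (fun p : E × E => f p.1) ρ → Integrable (fun p : E × E => g p.2) ρ →
      ∫ p, -(f p.1 + g p.2) ∂ρ = -(∫ x, f x ∂μ + ∫ y, g y ∂ν) := by
    intro ρ h1 h2 hif hig
    rw [integral_neg, integral_add hif hig]
    congr 2
    · rw [← h1, integral_map measurable_fst.aemeasurable hfc.aestronglyMeasurable]
    · rw [← h2, integral_map measurable_snd.aemeasurable hgc.aestronglyMeasurable]
  have hγeq : ∫ p, -⟪p.1, p.2⟫ ∂γ = -(∫ x, f x ∂μ + ∫ y, g y ∂ν) := by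
    rw [← hconst γ hγ₁ hγ₂ hIγf hIγg]
    refine integral_congr_ae ?_
    have hae : ∀ᵐ p ∂γ, p ∈ msupport γ := by
      rw [ae_iff]
      exact measure_compl_msupport γ
    filter_upwards [hae] with p hp
    have := heq p hp
    rw [this]
    ring
  have hγ'ge : -(∫ x, f x ∂μ + ∫ y, g y ∂ν) ≤ ∫ p, -⟪p.1, p.2⟫ ∂γ' := by
    rw [← hconst γ' hγ'₁ hγ'₂ hIγ'f hIγ'g]
    refine integral_mono_ae hIγ'h hIγ'c ?_
    have hae : ∀ᵐ p ∂γ', p ∈ X ×ˢ Y := by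
      rw [ae_iff]
      exact hγ'null
    filter_upwards [hae] with p hp
    have := hFY p.1 hp.1 p.2
    linarith
  rw [hγeq]
  exact hγ'ge

end MainSetting

section Hard

variable {n : ℕ}

local notation "E" => EuclideanSpace ℝ (Fin n)

lemma meas_map_finsum {ι α β : Type*} [MeasurableSpace α] [MeasurableSpace β]
    (s : Finset ι) (ρ : ι → Measure α) {f : α → β} (hf : Measurable f) :
    (∑ i ∈ s, ρ i).map f = ∑ i ∈ s, (ρ i).map f := by
  induction s using Finset.cons_induction with
  | empty => simp
  | cons a s ha ih => rw [Finset.sum_cons, Measure.map_add _ _ hf, ih, Finset.sum_cons]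

lemma inner_est {a b x y : E} {δ R η : ℝ}
    (hδ0 : 0 ≤ δ) (hδ1 : δ ≤ 1) (hRa : ‖a‖ ≤ R) (hRb : ‖b‖ ≤ R)
    (hδη : δ * (2 * R + 1) ≤ η) (hx : dist x a ≤ δ) (hy : dist y b ≤ δ) :
    |⟪x, y⟫ - ⟪a, b⟫| ≤ η := by
  have hR0 : 0 ≤ R := le_trans (norm_nonneg a) hRa
  have hxy : ⟪x, y⟫ - ⟪a, b⟫ = ⟪x - a, y⟫ + ⟪a, y - b⟫ := by
    rw [inner_sub_left, inner_sub_right]; ring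
  rw [hxy]
  have h1 : |⟪x - a, y⟫| ≤ ‖x - a‖ * ‖y‖ := abs_real_inner_le_norm _ _
  have h2 : |⟪a, y - b⟫| ≤ ‖a‖ * ‖y - b‖ := abs_real_inner_le_norm _ _
  have hxa : ‖x - a‖ ≤ δ := by rwa [← dist_eq_norm]
  have hyb : ‖y - b‖ ≤ δ := by rwa [← dist_eq_norm]
  have hyn : ‖y‖ ≤ R + 1 := by
    have := norm_sub_norm_le y b
    linarith
  have hb1 : ‖x - a‖ * ‖y‖ ≤ δ * (R + 1) :=
    mul_le_mul hxa hyn (norm_nonneg _) hδ0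
  have hb2 : ‖a‖ * ‖y - b‖ ≤ R * δ :=
    mul_le_mul hRa hyb (norm_nonneg _) hR0
  have habs := abs_add_le ⟪x - a, y⟫ ⟪a, y - b⟫
  nlinarith [habs, h1, h2, hb1, hb2]

end Hard
section Hard2

variable {n : ℕ}

local notation "E" => EuclideanSpace ℝ (Fin n)

set_option maxHeartbeats 1000000 in
lemma cm_of_opt (X Y : Set E) (hX : IsCompact X) (hY : IsCompact Y)
    (μ ν : Measure E) (hμ : IsProbabilityMeasure μ) (hν : IsProbabilityMeasure ν)
    (hμX : μ X = 1) (hνY : ν Y = 1)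
    (γ : Measure (E × E)) (hγ₁ : γ.map Prod.fst = μ) (hγ₂ : γ.map Prod.snd = ν)
    (hopt : ∀ γ' : Measure (E × E), γ'.map Prod.fst = μ → γ'.map Prod.snd = ν →
      ∫ p, -⟪p.1, p.2⟫ ∂γ ≤ ∫ p, -⟪p.1, p.2⟫ ∂γ') :
    CyclicallyMonotone (msupport γ) := by
  intro m p hp σ
  by_contra hcon
  push_neg at hcon
  -- hcon : ∑ i, -⟪(p i).1, (p (σ i)).2⟫ < ∑ i, -⟪(p i).1, (p i).2⟫
  have hm : 0 < m := by
    by_contra hm0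
    push_neg at hm0
    interval_cases m
    simp at hcon
  haveI : Nonempty (Fin m) := ⟨⟨0, hm⟩⟩
  haveI hγprob : IsProbabilityMeasure γ := prob_of_marg hμ hγ₁
  haveI hγfin : IsFiniteMeasure γ := ⟨by rw [measure_univ]; exact ENNReal.one_lt_top⟩
  set c : E × E → ℝ := fun q => -⟪q.1, q.2⟫ with hc
  set S₁ : ℝ := ∑ i, -⟪(p i).1, (p i).2⟫ with hS₁
  set S₂ : ℝ := ∑ i, -⟪(p i).1, (p (σ i)).2⟫ with hS₂
  have hS : S₂ < S₁ := hcon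
  set η : ℝ := (S₁ - S₂) / (4 * m + 4) with hη
  have hηpos : 0 < η := by
    apply div_pos (by linarith)
    positivity
  set R : ℝ := 1 + ∑ i, (‖(p i).1‖ + ‖(p i).2‖) with hRdef
  have hRsum : ∀ i : Fin m, ‖(p i).1‖ + ‖(p i).2‖ ≤ R - 1 := by
    intro i
    rw [hRdef]
    have := Finset.single_le_sum (f := fun i : Fin m => ‖(p i).1‖ + ‖(p i).2‖)
      (fun j _ => by positivity) (Finset.mem_univ i)
    simp only [add_sub_cancel_left]
    exact this
  have hR1 : ∀ i : Fin m, ‖(p i).1‖ ≤ R := fun i => by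
    have := hRsum i
    have h2 := norm_nonneg (p i).2
    linarith
  have hR2 : ∀ i : Fin m, ‖(p i).2‖ ≤ R := fun i => by
    have := hRsum i
    have h2 := norm_nonneg (p i).1
    linarith
  have hR0 : (0 : ℝ) ≤ R := le_trans (norm_nonneg _) (hR1 ⟨0, hm⟩)
  set δ : ℝ := min 1 (η / (2 * R + 1)) with hδdef
  have hδpos : 0 < δ := lt_min one_pos (div_pos hηpos (by linarith))
  have hδ1 : δ ≤ 1 := min_le_left _ _
  have hδη : δ * (2 * R + 1) ≤ η := by
    have h := min_le_right 1 (η / (2 * R + 1))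
    have h2R : (0:ℝ) < 2 * R + 1 := by linarith
    calc δ * (2 * R + 1) ≤ η / (2 * R + 1) * (2 * R + 1) := by
          exact mul_le_mul_of_nonneg_right h (le_of_lt h2R)
      _ = η := div_mul_cancel₀ η (ne_of_gt h2R)
  -- the small boxes
  set A : Fin m → Set (E × E) :=
    fun i => Metric.ball (p i).1 δ ×ˢ Metric.ball (p i).2 δ with hA
  have hAopen : ∀ i, IsOpen (A i) := fun i => Metric.isOpen_ball.prod Metric.isOpen_ball
  have hAmeas : ∀ i, MeasurableSet (A i) := fun i => (hAopen i).measurableSet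
  have hApos : ∀ i, 0 < γ (A i) :=
    fun i => hp i (A i) (hAopen i) ⟨Metric.mem_ball_self hδpos, Metric.mem_ball_self hδpos⟩
  have hAfin : ∀ i, γ (A i) ≠ ∞ := fun i => (lt_of_le_of_lt (measure_mono (Set.subset_univ _))
    (by rw [measure_univ]; exact ENNReal.one_lt_top)).ne
  set t : ℝ≥0∞ := Finset.univ.inf' Finset.univ_nonempty fun i => γ (A i) with ht
  have htle : ∀ i, t ≤ γ (A i) := fun i => Finset.inf'_le _ (Finset.mem_univ i)
  have htpos : 0 < t := by
    rw [ht, Finset.lt_inf'_iff]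
    exact fun i _ => hApos i
  have htfin : t ≠ ∞ := (lt_of_le_of_lt (htle ⟨0, hm⟩)
    (lt_of_le_of_ne le_top (hAfin ⟨0, hm⟩))).ne
  -- normalized pieces
  set γi : Fin m → Measure (E × E) := fun i => (γ (A i))⁻¹ • γ.restrict (A i) with hγi
  have hγiprob : ∀ i, IsProbabilityMeasure (γi i) := by
    intro i
    constructor
    rw [hγi]
    simp only [Measure.smul_apply, Measure.restrict_apply_univ, smul_eq_mul]
    exact ENNReal.inv_mul_cancel (hApos i).ne' (hAfin i)
  set μi : Fin m → Measure E := fun i => (γi i).map Prod.fst with hμi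
  set νi : Fin m → Measure E := fun i => (γi i).map Prod.snd with hνi
  have hμiprob : ∀ i, IsProbabilityMeasure (μi i) := fun i => by
    haveI := hγiprob i
    exact Measure.isProbabilityMeasure_map measurable_fst.aemeasurable
  have hνiprob : ∀ i, IsProbabilityMeasure (νi i) := fun i => by
    haveI := hγiprob i
    exact Measure.isProbabilityMeasure_map measurable_snd.aemeasurable
  set sub : Measure (E × E) := ∑ i, (t / m) • γi i with hsub
  set add : Measure (E × E) := ∑ i, (t / m) • ((μi i).prod (νi (σ i))) with hadd
  have hmne : (m : ℝ≥0∞) ≠ 0 := by exact_mod_cast hm.ne'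
  have hmfin : (m : ℝ≥0∞) ≠ ∞ := ENNReal.natCast_ne_top m
  -- sub ≤ γ
  have hsuble : sub ≤ γ := by
    rw [Measure.le_iff]
    intro s hs
    rw [hsub, Measure.finset_sum_apply]
    have hterm : ∀ i : Fin m, ((t / m) • γi i) s ≤ γ (s ∩ A i) / m := by
      intro i
      rw [Measure.smul_apply, hγi]
      simp only [Measure.smul_apply, smul_eq_mul]
      rw [Measure.restrict_apply hs]
      calc t / m * ((γ (A i))⁻¹ * γ (s ∩ A i))
          = (t / γ (A i)) * γ (s ∩ A i) / m := by
            rw [ENNReal.div_eq_inv_mul, ENNReal.div_eq_inv_mul, ENNReal.div_eq_inv_mul]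
            ring
        _ ≤ 1 * γ (s ∩ A i) / m := by
            gcongr
            calc t / γ (A i) ≤ γ (A i) / γ (A i) := ENNReal.div_le_div_right (htle i) _
              _ ≤ 1 := ENNReal.div_self_le_one
        _ = γ (s ∩ A i) / m := by rw [one_mul]
    calc ∑ i, ((t / m) • γi i) s ≤ ∑ i : Fin m, γ (s ∩ A i) / m :=
          Finset.sum_le_sum fun i _ => hterm i
      _ ≤ ∑ _i : Fin m, γ s / m := by
          refine Finset.sum_le_sum fun i _ => ?_
          exact ENNReal.div_le_div_right (measure_mono Set.inter_subset_left) _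
      _ = m * (γ s / m) := by rw [Finset.sum_const, Finset.card_univ, Fintype.card_fin]; simp
      _ = γ s := ENNReal.mul_div_cancel hmne hmfin
  haveI hsubfin : IsFiniteMeasure sub :=
    ⟨lt_of_le_of_lt (Measure.le_iff'.1 hsuble Set.univ) (measure_lt_top γ _)⟩
  set γ₀ : Measure (E × E) := γ - sub with hγ₀
  have hcancel : γ₀ + sub = γ := Measure.sub_add_cancel_of_le hsuble
  set γ' : Measure (E × E) := γ₀ + add with hγ'
  -- marginals of sub and add agree
  have hsubfst : sub.map Prod.fst = ∑ i, (t / m) • μi i := by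
    rw [hsub, meas_map_finsum _ _ measurable_fst]
    exact Finset.sum_congr rfl fun i _ => Measure.map_smul _ _ _
  have hsubsnd : sub.map Prod.snd = ∑ i, (t / m) • νi i := by
    rw [hsub, meas_map_finsum _ _ measurable_snd]
    exact Finset.sum_congr rfl fun i _ => Measure.map_smul _ _ _
  have haddfst : add.map Prod.fst = ∑ i, (t / m) • μi i := by
    rw [hadd, meas_map_finsum _ _ measurable_fst]
    refine Finset.sum_congr rfl fun i _ => ?_
    rw [Measure.map_smul]
    congr 1
    haveI := hμiprob i
    haveI := hνiprob (σ i)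
    rw [Measure.map_fst_prod, measure_univ, one_smul]
  have haddsnd : add.map Prod.snd = ∑ i, (t / m) • νi i := by
    rw [hadd, meas_map_finsum _ _ measurable_snd]
    have e1 : ∀ i : Fin m, ((t / m) • ((μi i).prod (νi (σ i)))).map Prod.snd
        = (t / m) • νi (σ i) := by
      intro i
      rw [Measure.map_smul]
      congr 1
      haveI := hμiprob i
      haveI := hνiprob (σ i)
      rw [Measure.map_snd_prod, measure_univ, one_smul]
    rw [Finset.sum_congr rfl fun i _ => e1 i]
    exact Equiv.sum_comp σ fun i => (t / m) • νi i
  have hγ'fst : γ'.map Prod.fst = μ := by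
    rw [hγ', Measure.map_add _ _ measurable_fst, haddfst, ← hsubfst,
      ← Measure.map_add _ _ measurable_fst, hcancel, hγ₁]
  have hγ'snd : γ'.map Prod.snd = ν := by
    rw [hγ', Measure.map_add _ _ measurable_snd, haddsnd, ← hsubsnd,
      ← Measure.map_add _ _ measurable_snd, hcancel, hγ₂]
  -- integrability
  have hγnull : γ ((X ×ˢ Y)ᶜ) = 0 := compl_null_of_marg hX hY hμ hν hμX hνY hγ₁ hγ₂
  have hIγ : Integrable c γ := integrable_of_compl_null (hX.prod hY) cost_continuous hγnull
  have hIγ₀ : Integrable c γ₀ := hIγ.mono_measure (by rw [hγ₀]; exact Measure.sub_le)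
  have hIsub : Integrable c sub := hIγ.mono_measure hsuble
  set K : Fin m → Set (E × E) :=
    fun i => Metric.closedBall (p i).1 δ ×ˢ Metric.closedBall (p i).2 δ with hK
  have hKcomp : ∀ i, IsCompact (K i) :=
    fun i => (isCompact_closedBall _ _).prod (isCompact_closedBall _ _)
  have hγiA : ∀ i, γi i ((A i)ᶜ) = 0 := by
    intro i
    rw [hγi]
    simp only [Measure.smul_apply, smul_eq_mul]
    rw [Measure.restrict_apply (hAmeas i).compl]
    simp
  have hAsubK : ∀ i, A i ⊆ K i := fun i =>
    Set.prod_mono Metric.ball_subset_closedBall Metric.ball_subset_closedBall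
  have hγiK : ∀ i, γi i ((K i)ᶜ) = 0 :=
    fun i => measure_mono_null (Set.compl_subset_compl.2 (hAsubK i)) (hγiA i)
  have hIγi : ∀ i, Integrable c (γi i) := fun i => by
    haveI := hγiprob i
    exact integrable_of_compl_null (hKcomp i) cost_continuous (hγiK i)
  set Pi : Fin m → Measure (E × E) := fun i => (μi i).prod (νi (σ i)) with hPi
  have hPiprob : ∀ i, IsProbabilityMeasure (Pi i) := fun i => by
    haveI h1 := hμiprob i
    haveI h2 := hνiprob (σ i)
    exact MeasureTheory.Measure.prod.instIsProbabilityMeasure (μi i) (νi (σ i))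
  have hμiB : ∀ i, μi i ((Metric.closedBall (p i).1 δ)ᶜ) = 0 := by
    intro i
    rw [hμi, Measure.map_apply measurable_fst measurableSet_closedBall.compl]
    refine measure_mono_null (fun q hq => ?_) (hγiA i)
    intro hqA
    exact hq (Metric.ball_subset_closedBall hqA.1)
  have hνiB : ∀ i, νi i ((Metric.closedBall (p i).2 δ)ᶜ) = 0 := by
    intro i
    rw [hνi, Measure.map_apply measurable_snd measurableSet_closedBall.compl]
    refine measure_mono_null (fun q hq => ?_) (hγiA i)
    intro hqA
    exact hq (Metric.ball_subset_closedBall hqA.2)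
  set L : Fin m → Set (E × E) :=
    fun i => Metric.closedBall (p i).1 δ ×ˢ Metric.closedBall (p (σ i)).2 δ with hL
  have hLcomp : ∀ i, IsCompact (L i) :=
    fun i => (isCompact_closedBall _ _).prod (isCompact_closedBall _ _)
  have hPiL : ∀ i, Pi i ((L i)ᶜ) = 0 := by
    intro i
    haveI := hμiprob i; haveI := hνiprob (σ i)
    have hsubU : (L i)ᶜ ⊆ (Prod.fst ⁻¹' (Metric.closedBall (p i).1 δ)ᶜ)
        ∪ (Prod.snd ⁻¹' (Metric.closedBall (p (σ i)).2 δ)ᶜ) := by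
      intro q hq
      simp only [hL, Set.mem_compl_iff, Set.mem_prod, not_and_or] at hq
      rcases hq with h | h
      · exact Or.inl h
      · exact Or.inr h
    refine measure_mono_null hsubU (le_antisymm (le_trans (measure_union_le _ _) ?_) zero_le)
    have e1 : Pi i (Prod.fst ⁻¹' (Metric.closedBall (p i).1 δ)ᶜ)
        = μi i ((Metric.closedBall (p i).1 δ)ᶜ) := by
      rw [hPi, ← Measure.map_apply measurable_fst measurableSet_closedBall.compl,
        Measure.map_fst_prod, measure_univ, one_smul]
    have e2 : Pi i (Prod.snd ⁻¹' (Metric.closedBall (p (σ i)).2 δ)ᶜ)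
        = νi (σ i) ((Metric.closedBall (p (σ i)).2 δ)ᶜ) := by
      rw [hPi, ← Measure.map_apply measurable_snd measurableSet_closedBall.compl,
        Measure.map_snd_prod, measure_univ, one_smul]
    rw [e1, e2, hμiB i, hνiB (σ i)]
    simp
  have hIPi : ∀ i, Integrable c (Pi i) := fun i => by
    haveI := hPiprob i
    exact integrable_of_compl_null (hLcomp i) cost_continuous (hPiL i)
  have htm_ne_top : (t / m : ℝ≥0∞) ≠ ∞ := (ENNReal.div_lt_top htfin hmne).ne
  have hIadd : Integrable c add := by
    rw [hadd]
    refine integrable_finset_sum_measure.2 fun i _ => ?_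
    exact (hIPi i).smul_measure htm_ne_top
  -- integral computations
  set tr : ℝ := (t / m : ℝ≥0∞).toReal with htr
  have htrpos : 0 < tr := by
    rw [htr]
    refine ENNReal.toReal_pos ?_ htm_ne_top
    simp only [ne_eq, ENNReal.div_eq_zero_iff, not_or]
    exact ⟨htpos.ne', hmfin⟩
  have hsubint : ∫ q, c q ∂sub = ∑ i, tr * ∫ q, c q ∂(γi i) := by
    rw [hsub, integral_finset_sum_measure (fun i _ => (hIγi i).smul_measure htm_ne_top)]
    refine Finset.sum_congr rfl fun i _ => ?_
    rw [integral_smul_measure, htr, smul_eq_mul]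
  have haddint : ∫ q, c q ∂add = ∑ i, tr * ∫ q, c q ∂(Pi i) := by
    rw [hadd, integral_finset_sum_measure (fun i _ => (hIPi i).smul_measure htm_ne_top)]
    refine Finset.sum_congr rfl fun i _ => ?_
    rw [integral_smul_measure, htr, smul_eq_mul]
  -- pointwise integral bounds
  have hesti : ∀ i, -⟪(p i).1, (p i).2⟫ - η ≤ ∫ q, c q ∂(γi i) := by
    intro i
    haveI := hγiprob i
    have hae : ∀ᵐ q ∂(γi i), -⟪(p i).1, (p i).2⟫ - η ≤ c q := by
      rw [ae_iff]
      refine measure_mono_null (fun q hq => ?_) (hγiA i)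
      simp only [Set.mem_setOf_eq, not_le] at hq
      intro hqA
      have h1 : dist q.1 (p i).1 ≤ δ := le_of_lt hqA.1
      have h2 : dist q.2 (p i).2 ≤ δ := le_of_lt hqA.2
      have hest := inner_est hδpos.le hδ1 (hR1 i) (hR2 i) hδη h1 h2
      have habs := abs_le.1 hest
      have hcq : c q = -⟪q.1, q.2⟫ := rfl
      rw [hcq] at hq
      linarith [habs.2]
    calc -⟪(p i).1, (p i).2⟫ - η
        = ∫ _, (-⟪(p i).1, (p i).2⟫ - η) ∂(γi i) := by
          rw [integral_const, probReal_univ]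
          simp only [ENNReal.toReal_one, one_smul]
      _ ≤ ∫ q, c q ∂(γi i) := integral_mono_ae (integrable_const _) (hIγi i) hae
  have hestiP : ∀ i, ∫ q, c q ∂(Pi i) ≤ -⟪(p i).1, (p (σ i)).2⟫ + η := by
    intro i
    haveI := hPiprob i
    have hae : ∀ᵐ q ∂(Pi i), c q ≤ -⟪(p i).1, (p (σ i)).2⟫ + η := by
      rw [ae_iff]
      refine measure_mono_null (fun q hq => ?_) (hPiL i)
      simp only [Set.mem_setOf_eq, not_le] at hq
      intro hqL
      have h1 : dist q.1 (p i).1 ≤ δ := hqL.1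
      have h2 : dist q.2 (p (σ i)).2 ≤ δ := hqL.2
      have hest := inner_est hδpos.le hδ1 (hR1 i) (hR2 (σ i)) hδη h1 h2
      have habs := abs_le.1 hest
      have hcq : c q = -⟪q.1, q.2⟫ := rfl
      rw [hcq] at hq
      linarith [habs.1]
    calc ∫ q, c q ∂(Pi i)
        ≤ ∫ _, (-⟪(p i).1, (p (σ i)).2⟫ + η) ∂(Pi i) :=
          integral_mono_ae (hIPi i) (integrable_const _) hae
      _ = -⟪(p i).1, (p (σ i)).2⟫ + η := by
          rw [integral_const, probReal_univ]
          simp only [ENNReal.toReal_one, one_smul]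
  -- sum the bounds
  have hsum1 : tr * (S₁ - m * η) ≤ ∫ q, c q ∂sub := by
    rw [hsubint]
    have h1 : ∑ i : Fin m, tr * (-⟪(p i).1, (p i).2⟫ - η)
        ≤ ∑ i, tr * ∫ q, c q ∂(γi i) :=
      Finset.sum_le_sum fun i _ => mul_le_mul_of_nonneg_left (hesti i) htrpos.le
    have h2 : ∑ i : Fin m, tr * (-⟪(p i).1, (p i).2⟫ - η) = tr * (S₁ - m * η) := by
      rw [← Finset.mul_sum, hS₁, Finset.sum_sub_distrib, Finset.sum_const,
        Finset.card_univ, Fintype.card_fin]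
      simp [mul_comm]
    linarith [h1, h2]
  have hsum2 : ∫ q, c q ∂add ≤ tr * (S₂ + m * η) := by
    rw [haddint]
    have h1 : ∑ i, tr * ∫ q, c q ∂(Pi i)
        ≤ ∑ i : Fin m, tr * (-⟪(p i).1, (p (σ i)).2⟫ + η) :=
      Finset.sum_le_sum fun i _ => mul_le_mul_of_nonneg_left (hestiP i) htrpos.le
    have h2 : ∑ i : Fin m, tr * (-⟪(p i).1, (p (σ i)).2⟫ + η) = tr * (S₂ + m * η) := by
      rw [← Finset.mul_sum, hS₂, Finset.sum_add_distrib, Finset.sum_const,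
        Finset.card_univ, Fintype.card_fin]
      simp [mul_comm]
    linarith [h1, h2]
  -- strict middle inequality
  have hM : (0 : ℝ) < m := by exact_mod_cast hm
  have hηeq : η * (4 * m + 4) = S₁ - S₂ := by
    rw [hη]
    field_simp
  have hstep : S₂ + m * η < S₁ - m * η := by
    nlinarith [mul_nonneg hM.le hηpos.le, hηpos, hηeq]
  -- conclude
  have hneq := hopt γ' hγ'fst hγ'snd
  have hγint : ∫ q, c q ∂γ = ∫ q, c q ∂γ₀ + ∫ q, c q ∂sub := by
    conv_lhs => rw [← hcancel]
    exact integral_add_measure hIγ₀ hIsub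
  have hγ'int : ∫ q, c q ∂γ' = ∫ q, c q ∂γ₀ + ∫ q, c q ∂add := by
    rw [hγ']
    exact integral_add_measure hIγ₀ hIadd
  have hmid : tr * (S₂ + m * η) < tr * (S₁ - m * η) :=
    mul_lt_mul_of_pos_left hstep htrpos
  have hlt : ∫ q, c q ∂γ' < ∫ q, c q ∂γ := by
    rw [hγint, hγ'int]
    linarith [hsum1, hsum2, hmid]
  have hge : ∫ q, c q ∂γ ≤ ∫ q, c q ∂γ' := hneq
  linarith [hlt, hge]

end Hard2

/-- The Fundamental Theorem of Optimal Transport for the cost `c(x,y) = −⟨x,y⟩` on compact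
subsets of `ℝ^n`: a transport plan is optimal iff its support is cyclically monotone iff its
support lies in the graph of the subdifferential of a convex function. -/
theorem fundamental_theorem_OT {n : ℕ}
    (X Y : Set (EuclideanSpace ℝ (Fin n))) (hX : IsCompact X) (hY : IsCompact Y)
    (μ ν : Measure (EuclideanSpace ℝ (Fin n)))
    (hμ : IsProbabilityMeasure μ) (hν : IsProbabilityMeasure ν)
    (hμX : μ X = 1) (hνY : ν Y = 1)
    (γ : Measure (EuclideanSpace ℝ (Fin n) × EuclideanSpace ℝ (Fin n)))
    (hγ₁ : γ.map Prod.fst = μ) (hγ₂ : γ.map Prod.snd = ν) :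
    ((∀ γ' : Measure (EuclideanSpace ℝ (Fin n) × EuclideanSpace ℝ (Fin n)),
        γ'.map Prod.fst = μ → γ'.map Prod.snd = ν →
        ∫ p, -⟪p.1, p.2⟫ ∂γ ≤ ∫ p, -⟪p.1, p.2⟫ ∂γ') ↔
      CyclicallyMonotone (msupport γ)) ∧
    (CyclicallyMonotone (msupport γ) ↔
      ∃ f : EuclideanSpace ℝ (Fin n) → ℝ, ConvexOn ℝ Set.univ f ∧
        msupport γ ⊆ {p | p.2 ∈ SubDiff f p.1}) := by
  have hsubof : CyclicallyMonotone (msupport γ) →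
      ∃ f : EuclideanSpace ℝ (Fin n) → ℝ, ConvexOn ℝ Set.univ f ∧
        msupport γ ⊆ {p | p.2 ∈ SubDiff f p.1} := by
    intro hcm
    refine rockafellar hcm ?_
    obtain ⟨R, hR⟩ := isBounded_iff_forall_norm_le.1 hY.isBounded
    have hsupp : msupport γ ⊆ X ×ˢ Y := msupport_subset_closed
      (hX.isClosed.prod hY.isClosed) (compl_null_of_marg hX hY hμ hν hμX hνY hγ₁ hγ₂)
    exact ⟨R, fun p hp => hR p.2 (hsupp hp).2⟩
  have hoptof : (∃ f : EuclideanSpace ℝ (Fin n) → ℝ, ConvexOn ℝ Set.univ f ∧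
      msupport γ ⊆ {p | p.2 ∈ SubDiff f p.1}) →
      (∀ γ' : Measure (EuclideanSpace ℝ (Fin n) × EuclideanSpace ℝ (Fin n)),
        γ'.map Prod.fst = μ → γ'.map Prod.snd = ν →
        ∫ p, -⟪p.1, p.2⟫ ∂γ ≤ ∫ p, -⟪p.1, p.2⟫ ∂γ') := by
    rintro ⟨f, hf, hs⟩
    exact opt_of_subdiff X Y hX hY μ ν hμ hν hμX hνY γ hγ₁ hγ₂ f hf hs
  have hcmof := cm_of_opt X Y hX hY μ ν hμ hν hμX hνY γ hγ₁ hγ₂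
  exact ⟨⟨hcmof, fun hcm => hoptof (hsubof hcm)⟩,
    ⟨hsubof, fun hex => hcmof (hoptof hex)⟩⟩

end
end
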